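/- arXiv:1708.03591 — 2 statements merged into one kernel-verified Lean document; each statement's English description precedes it below -/
import Mathlib

section
/- Consider N agents in ℝ³ with single-integrator dynamics, where agent i's local frame orientation is given by a fixed special orthogonal matrix C_i ∈ SO(3). Let G be a weighted directed graph on {1,…,N} with positive weights l_{ij} > 0 on its edges and suppose G has a rooted-out branch. Let p_1*,…,p_N* ∈ ℝ³ be desired positions, k_u > 0, and suppose Ĉ_i : [0,∞) → ℝ^{3×3} are orientation estimates for which there exists a matrix C* ∈ ℝ^{3×3} and constants k_w, λ_w > 0 such that ‖C_i^T Ĉ_i(t) − C*‖ ≤ k_w e^{−λ_w t} for all i and all t ≥ 0. If p_1,…,p_N : [0,∞) → ℝ³ are differentiable and satisfy the formation control law ṗ_i(t) = k_u Σ_{j : l_{ij} > 0} l_{ij} ( (p_j(t) − p_i(t)) − C_i^T Ĉ_i(t) (p_j* − p_i*) ), then there exist a point p_∞ ∈ ℝ³ and constants c > 0, λ > 0 such that ‖p_i(t) − (C* p_i* + p_∞)‖ ≤ c e^{−λ t} for all i and all t ≥ 0; in particular p_j(t) − p_i(t) → C*(p_j* − p_i*) as t → ∞ for all i, j. -/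
open Matrix Filter MeasureTheory NormedSpace Nat


/-- `G` has a rooted-out branch: some vertex has a directed path to every other vertex
(information flows from `j` to `i` along an edge when `l i j > 0`). -/
def hasRootedOutBranch {N : ℕ} (l : Fin N → Fin N → ℝ) : Prop :=
  ∃ r : Fin N, ∀ v : Fin N, Relation.ReflTransGen (fun u v => 0 < l v u) r v

/-- The Euclidean norm on `ℝ^m`. -/
noncomputable def enorm {m : Type*} [Fintype m] (v : m → ℝ) : ℝ :=
  Real.sqrt (∑ i, v i ^ 2)

/-- The (Frobenius) norm of a real matrix. -/
noncomputable def mnorm {m n : Type*} [Fintype m] [Fintype n]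
    (A : Matrix m n ℝ) : ℝ :=
  Real.sqrt (∑ i, ∑ j, A i j ^ 2)

namespace FormationAux

attribute [local instance] Matrix.linftyOpNormedAddCommGroup Matrix.linftyOpNormedRing
  Matrix.linftyOpNormedAlgebra

variable {N : ℕ}

noncomputable abbrev entryCLM (i j : Fin N) : Matrix (Fin N) (Fin N) ℝ →L[ℝ] ℝ :=
  LinearMap.toContinuousLinearMap
    { toFun := fun M => M i j
      map_add' := fun _ _ => rfl
      map_smul' := fun _ _ => rfl }

lemma exp_entry_hasSum (M : Matrix (Fin N) (Fin N) ℝ) (i j : Fin N) :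
    HasSum (fun k : ℕ => ((k ! : ℝ))⁻¹ * (M ^ k) i j) (NormedSpace.exp M i j) := by
  have h2 := (NormedSpace.exp_series_hasSum_exp' (𝕂 := ℝ) M).mapL (entryCLM i j)
  exact h2

lemma pow_entry_nonneg {M : Matrix (Fin N) (Fin N) ℝ} (h : ∀ i j, 0 ≤ M i j) :
    ∀ (k : ℕ) (i j : Fin N), 0 ≤ (M ^ k) i j := by
  intro k
  induction k with
  | zero =>
    intro i j
    by_cases hij : i = j <;> simp [Matrix.one_apply, hij]
  | succ n ih =>
    intro i j
    rw [pow_succ, Matrix.mul_apply]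
    exact Finset.sum_nonneg fun m _ => mul_nonneg (ih i m) (h m j)

lemma exp_smul_one (c : ℝ) :
    NormedSpace.exp (c • (1 : Matrix (Fin N) (Fin N) ℝ)) = Real.exp c • (1 : Matrix (Fin N) (Fin N) ℝ) := by
  have h1 : c • (1 : Matrix (Fin N) (Fin N) ℝ) = algebraMap ℝ (Matrix (Fin N) (Fin N) ℝ) c :=
    (Algebra.algebraMap_eq_smul_one c).symm
  rw [h1]
  exact (NormedSpace.algebraMap_exp_comm c).symm.trans
    (by rw [Algebra.algebraMap_eq_smul_one, Real.exp_eq_exp_ℝ])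

lemma exp_eq_smul_exp_add (M : Matrix (Fin N) (Fin N) ℝ) (c : ℝ) :
    NormedSpace.exp M = Real.exp (-c) • NormedSpace.exp (M + c • (1 : Matrix (Fin N) (Fin N) ℝ)) := by
  have hcomm : Commute M (c • (1 : Matrix (Fin N) (Fin N) ℝ)) :=
    (Commute.one_right M).smul_right c
  rw [Matrix.exp_add_of_commute M _ hcomm, exp_smul_one, mul_smul_comm, mul_one,
    smul_smul, ← Real.exp_add, neg_add_cancel, Real.exp_zero, one_smul]

/-- Entries of `exp` of a matrix with nonnegative entries are nonnegative, with a lower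
bound by any single term of the series. -/
lemma exp_entry_nonneg_aux {B : Matrix (Fin N) (Fin N) ℝ} (hB : ∀ i j, 0 ≤ B i j)
    (i j : Fin N) : 0 ≤ NormedSpace.exp B i j :=
  (exp_entry_hasSum B i j).nonneg fun k =>
    mul_nonneg (by positivity) (pow_entry_nonneg hB k i j)

lemma exp_entry_ge_term {B : Matrix (Fin N) (Fin N) ℝ} (hB : ∀ i j, 0 ≤ B i j)
    (k : ℕ) (i j : Fin N) : ((k ! : ℝ))⁻¹ * (B ^ k) i j ≤ NormedSpace.exp B i j :=
  le_hasSum (exp_entry_hasSum B i j) k fun m _ =>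
    mul_nonneg (by positivity) (pow_entry_nonneg hB m i j)

section Metzler

variable (S : Matrix (Fin N) (Fin N) ℝ)

/-- `Φ t = exp (t S)`. -/
noncomputable def Phi (t : ℝ) : Matrix (Fin N) (Fin N) ℝ := NormedSpace.exp (t • S)

lemma Phi_zero : Phi S 0 = 1 := by simp [Phi, NormedSpace.exp_zero]

lemma Phi_mul (a b : ℝ) : Phi S (a + b) = Phi S a * Phi S b := by
  rw [Phi, add_smul]
  exact Matrix.exp_add_of_commute _ _ (((Commute.refl S).smul_left a).smul_right b)

variable {S}

/-- a shift constant making `t • S + c • 1` entrywise nonnegative -/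
lemma exists_shift (hS0 : ∀ i j : Fin N, i ≠ j → 0 ≤ S i j) (t : ℝ) (ht : 0 ≤ t) (i₀ : Fin N) :
    ∃ c : ℝ, (∀ i j, 0 ≤ (t • S + c • (1 : Matrix (Fin N) (Fin N) ℝ)) i j) ∧
      (∀ i, 1 ≤ (t • S + c • (1 : Matrix (Fin N) (Fin N) ℝ)) i i) := by
  haveI : Nonempty (Fin N) := ⟨i₀⟩
  refine ⟨1 + t * (Finset.univ.sup' Finset.univ_nonempty fun m => |S m m|), ?_, ?_⟩
  · intro i j
    by_cases hij : i = j
    · subst hij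
      have h1 : |S i i| ≤ Finset.univ.sup' Finset.univ_nonempty fun m => |S m m| :=
        Finset.le_sup' (fun m => |S m m|) (Finset.mem_univ i)
      have h2 : -(t * S i i) ≤ t * |S i i| := by
        rw [← mul_neg]
        exact mul_le_mul_of_nonneg_left (neg_le_abs _) ht
      simp only [Matrix.add_apply, Matrix.smul_apply, Matrix.one_apply_eq, smul_eq_mul, mul_one]
      nlinarith [mul_le_mul_of_nonneg_left h1 ht]
    · simp only [Matrix.add_apply, Matrix.smul_apply, Matrix.one_apply_ne hij, smul_eq_mul,
        mul_zero, add_zero]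
      exact mul_nonneg ht (hS0 i j hij)
  · intro i
    have h1 : |S i i| ≤ Finset.univ.sup' Finset.univ_nonempty fun m => |S m m| :=
      Finset.le_sup' (fun m => |S m m|) (Finset.mem_univ i)
    have h2 : -(t * S i i) ≤ t * |S i i| := by
      rw [← mul_neg]
      exact mul_le_mul_of_nonneg_left (neg_le_abs _) ht
    simp only [Matrix.add_apply, Matrix.smul_apply, Matrix.one_apply_eq, smul_eq_mul, mul_one]
    nlinarith [mul_le_mul_of_nonneg_left h1 ht]

lemma Phi_nonneg (hS0 : ∀ i j : Fin N, i ≠ j → 0 ≤ S i j) {t : ℝ} (ht : 0 ≤ t) (i j : Fin N) : 0 ≤ Phi S t i j := by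
  obtain ⟨c, hc, -⟩ := exists_shift hS0 t ht i
  rw [Phi, exp_eq_smul_exp_add (t • S) c]
  have := exp_entry_nonneg_aux hc i j
  simp only [Matrix.smul_apply, smul_eq_mul]
  exact mul_nonneg (Real.exp_nonneg _) this

/-- positivity of entries of `Phi S 1` along chains -/
lemma Phi_one_pos (hS0 : ∀ i j : Fin N, i ≠ j → 0 ≤ S i j) {r i : Fin N}
    (h : Relation.ReflTransGen (fun u v => u = v ∨ 0 < S v u) r i) :
    0 < Phi S 1 i r := by
  obtain ⟨c, hc, hcd⟩ := exists_shift hS0 1 zero_le_one i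
  set B := (1 : ℝ) • S + c • (1 : Matrix (Fin N) (Fin N) ℝ) with hBdef
  have hBpos : ∀ u v : Fin N, (u = v ∨ 0 < S v u) → 0 < B v u := by
    intro u v huv
    rcases huv with rfl | hpos
    · exact lt_of_lt_of_le one_pos (hcd u)
    · by_cases hvu : v = u
      · subst hvu
        exact lt_of_lt_of_le one_pos (hcd v)
      · have : B v u = S v u := by
          simp [hBdef, Matrix.one_apply_ne hvu]
        rw [this]; exact hpos
  have key : ∃ k : ℕ, 0 < (B ^ k) i r := by
    induction h with
    | refl => exact ⟨0, by simp [Matrix.one_apply]⟩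
    | @tail b c' hab hbc ih =>
      obtain ⟨k, hk⟩ := ih
      refine ⟨k + 1, ?_⟩
      rw [_root_.pow_succ', Matrix.mul_apply]
      have hterm : 0 < B c' b * (B ^ k) b r := mul_pos (hBpos b c' hbc) hk
      have hle : B c' b * (B ^ k) b r ≤ ∑ w, B c' w * (B ^ k) w r :=
        Finset.single_le_sum
          (fun w _ => mul_nonneg (hc c' w) (pow_entry_nonneg hc k w r)) (Finset.mem_univ b)
      linarith
  obtain ⟨k, hk⟩ := key
  have hterm : 0 < ((k ! : ℝ))⁻¹ * (B ^ k) i r := by positivity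
  have hge := exp_entry_ge_term hc k i r
  rw [Phi, exp_eq_smul_exp_add (1 • S) c]
  simp only [Matrix.smul_apply, smul_eq_mul]
  exact mul_pos (Real.exp_pos _) (lt_of_lt_of_le hterm hge)

lemma Phi_rowsum (t : ℝ) (hS1 : S *ᵥ (fun _ => (1 : ℝ)) = 0) (i : Fin N) :
    ∑ j, Phi S t i j = 1 := by
  classical
  have hM1 : (t • S) *ᵥ (fun _ => (1 : ℝ)) = 0 := by
    rw [Matrix.smul_mulVec, hS1, smul_zero]
  -- mulVec CLM
  let L : Matrix (Fin N) (Fin N) ℝ →L[ℝ] (Fin N → ℝ) :=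
    LinearMap.toContinuousLinearMap
      { toFun := fun M => M *ᵥ (fun _ => (1 : ℝ))
        map_add' := fun A B => Matrix.add_mulVec A B _
        map_smul' := fun c A => by simp [Matrix.smul_mulVec] }
  have h2 := (NormedSpace.exp_series_hasSum_exp' (𝕂 := ℝ) (t • S)).mapL L
  have hterm : ∀ k : ℕ, k ≠ 0 →
      L (((k ! : ℝ))⁻¹ • (t • S) ^ k) = 0 := by
    intro k hk
    obtain ⟨m, rfl⟩ := Nat.exists_eq_succ_of_ne_zero hk
    have : ((t • S) ^ (m + 1)) *ᵥ (fun _ => (1 : ℝ)) = 0 := by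
      rw [pow_succ, ← Matrix.mulVec_mulVec, hM1, Matrix.mulVec_zero]
    simp only [L, ContinuousLinearMap.map_smul]
    simp [LinearMap.coe_toContinuousLinearMap', this]
  have h3 : HasSum (fun k => L (((k ! : ℝ))⁻¹ • (t • S) ^ k))
      (L (((0 ! : ℝ))⁻¹ • (t • S) ^ 0)) := hasSum_single 0 hterm
  have h4 := h2.unique h3
  have h5 : NormedSpace.exp (t • S) *ᵥ (fun _ => (1 : ℝ)) = fun _ => (1 : ℝ) := by
    have : L (NormedSpace.exp (t • S)) = _ := h4
    simpa [L, LinearMap.coe_toContinuousLinearMap'] using this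
  have := congrFun h5 i
  simpa [Matrix.mulVec, dotProduct, Phi] using this

end Metzler

section Repr

variable (S : Matrix (Fin N) (Fin N) ℝ)

lemma Phi_entry_continuous (c : ℝ) (i j : Fin N) :
    Continuous fun s : ℝ => Phi S (c - s) i j := by
  have h1 : Continuous fun s : ℝ => (c - s) • S :=
    ((continuous_const.sub continuous_id)).smul continuous_const
  exact (entryCLM i j).continuous.comp (NormedSpace.exp_continuous.comp h1)

lemma Phi_hasDerivAt (t : ℝ) :
    HasDerivAt (fun u : ℝ => Phi S (-u)) (-(Phi S (-t) * S)) t := by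
  have h1 : HasDerivAt (fun u : ℝ => NormedSpace.exp (u • S)) (NormedSpace.exp ((-t) • S) * S) (-t) :=
    hasDerivAt_exp_smul_const S (-t)
  have h2 : HasDerivAt (fun u : ℝ => -u) (-1 : ℝ) t := (hasDerivAt_id t).neg
  have h3 := h1.scomp t h2
  have h4 : ((fun u : ℝ => NormedSpace.exp (u • S)) ∘ Neg.neg) = fun u : ℝ => NormedSpace.exp ((-u) • S) := rfl
  rw [h4] at h3
  rw [neg_one_smul] at h3
  exact h3

lemma Phi_entry_hasDerivAt (t : ℝ) (i j : Fin N) :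
    HasDerivAt (fun u : ℝ => Phi S (-u) i j) (-((Phi S (-t) * S) i j)) t := by
  have := (entryCLM i j).hasFDerivAt.comp_hasDerivAt t (Phi_hasDerivAt S t)
  exact this

variable {S}

/-- interval integrability of `s ↦ ∑ j, Phi S (c - s) i j * g s j`. -/
lemma phi_g_integrable
    (g : ℝ → Fin N → ℝ)
    (hgm : AEStronglyMeasurable g (volume.restrict (Set.Ici (0:ℝ))))
    (K lg : ℝ) (hlg : 0 < lg)
    (hg : ∀ t, 0 ≤ t → ∀ i, |g t i| ≤ K * Real.exp (-lg * t))
    {a b : ℝ} (ha : 0 ≤ a) (hab : a ≤ b) (c : ℝ) (i : Fin N) :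
    IntervalIntegrable (fun s => ∑ j, Phi S (c - s) i j * g s j) volume a b := by
  have hsub : Set.uIoc a b ⊆ Set.Ici (0:ℝ) := by
    rw [Set.uIoc_of_le hab]
    exact fun s hs => le_of_lt (lt_of_le_of_lt ha hs.1)
  have hgm' : AEStronglyMeasurable g (volume.restrict (Set.uIoc a b)) :=
    hgm.mono_measure (Measure.restrict_mono hsub le_rfl)
  have hgj : ∀ j, AEStronglyMeasurable (fun s => g s j) (volume.restrict (Set.uIoc a b)) :=
    fun j => (continuous_apply j).comp_aestronglyMeasurable hgm'
  have hmeas : AEStronglyMeasurable (fun s => ∑ j, Phi S (c - s) i j * g s j)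
      (volume.restrict (Set.uIoc a b)) :=
    Finset.aestronglyMeasurable_fun_sum _ fun j _ =>
      ((Phi_entry_continuous S c i j).aestronglyMeasurable).mul (hgj j)
  -- bound
  have hcont : ContinuousOn (fun s : ℝ => ∑ j, |Phi S (c - s) i j|) (Set.uIcc a b) :=
    (continuous_finset_sum _ fun j _ => (Phi_entry_continuous S c i j).abs).continuousOn
  obtain ⟨C1, hC1⟩ := isCompact_uIcc.exists_bound_of_continuousOn hcont
  have hK : 0 ≤ K * Real.exp (-lg * a) := by
    have := hg a ha i
    have h0 : (0:ℝ) ≤ |g a i| := abs_nonneg _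
    linarith
  have hbound : ∀ s ∈ Set.uIoc a b,
      |∑ j, Phi S (c - s) i j * g s j| ≤ C1 * (K * Real.exp (-lg * a)) := by
    intro s hs
    have hs' : s ∈ Set.Ioc a b := by rwa [Set.uIoc_of_le hab] at hs
    have hs0 : 0 ≤ s := le_of_lt (lt_of_le_of_lt ha hs'.1)
    have hgb : ∀ j, |g s j| ≤ K * Real.exp (-lg * a) := by
      intro j
      refine le_trans (hg s hs0 j) ?_
      have : Real.exp (-lg * s) ≤ Real.exp (-lg * a) :=
        Real.exp_le_exp.2 (by nlinarith [hs'.1])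
      nlinarith [Real.exp_pos (-lg * s), Real.exp_pos (-lg * a)]
    calc |∑ j, Phi S (c - s) i j * g s j| ≤ ∑ j, |Phi S (c - s) i j * g s j| :=
          Finset.abs_sum_le_sum_abs _ _
      _ ≤ ∑ j, |Phi S (c - s) i j| * (K * Real.exp (-lg * a)) := by
          refine Finset.sum_le_sum fun j _ => ?_
          rw [abs_mul]
          exact mul_le_mul_of_nonneg_left (hgb j) (abs_nonneg _)
      _ = (∑ j, |Phi S (c - s) i j|) * (K * Real.exp (-lg * a)) := by
          rw [Finset.sum_mul]
      _ ≤ C1 * (K * Real.exp (-lg * a)) := by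
          refine mul_le_mul_of_nonneg_right ?_ hK
          have := hC1 s (Set.uIoc_subset_uIcc hs)
          exact le_trans (le_abs_self _) (by simpa using this)
  rw [intervalIntegrable_iff]
  exact ⟨hmeas, HasFiniteIntegral.restrict_of_bounded _ measure_Ioc_lt_top
    ((ae_restrict_iff' measurableSet_uIoc).2 (ae_of_all _ fun s hs => by
      simpa [Real.norm_eq_abs] using hbound s hs))⟩

/-- Variation of constants representation. -/
lemma repr_formula
    (x g : ℝ → Fin N → ℝ)
    (hx : ∀ t : ℝ, 0 ≤ t → HasDerivAt x (S *ᵥ x t + g t) t)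
    (hgm : AEStronglyMeasurable g (volume.restrict (Set.Ici (0:ℝ))))
    (K lg : ℝ) (hlg : 0 < lg)
    (hg : ∀ t, 0 ≤ t → ∀ i, |g t i| ≤ K * Real.exp (-lg * t))
    {a b : ℝ} (ha : 0 ≤ a) (hab : a ≤ b) (i : Fin N) :
    x b i = (Phi S (b - a) *ᵥ x a) i + ∫ s in a..b, ∑ j, Phi S (b - s) i j * g s j := by
  classical
  -- coordinates of x
  have hxj : ∀ t : ℝ, 0 ≤ t → ∀ j : Fin N,
      HasDerivAt (fun u => x u j) ((S *ᵥ x t + g t) j) t :=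
    fun t ht j => hasDerivAt_pi.1 (hx t ht) j
  -- FTC for each m
  have hFTC : ∀ m : Fin N,
      (∫ s in a..b, ∑ j, Phi S (0 - s) m j * g s j)
        = (∑ j, Phi S (-b) m j * x b j) - (∑ j, Phi S (-a) m j * x a j) := by
    intro m
    refine intervalIntegral.integral_eq_sub_of_hasDerivAt
      (f := fun u => ∑ j, Phi S (-u) m j * x u j) (fun u hu => ?_)
      (phi_g_integrable g hgm K lg hlg hg ha hab 0 m)
    have hu0 : 0 ≤ u := by
      rw [Set.uIcc_of_le hab] at hu
      exact le_trans ha hu.1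
    have hder : HasDerivAt (fun u => ∑ j, Phi S (-u) m j * x u j)
        (∑ j, (-((Phi S (-u) * S) m j) * x u j
          + Phi S (-u) m j * ((S *ᵥ x u + g u) j))) u := by
      refine HasDerivAt.fun_sum fun j _ => ?_
      exact (Phi_entry_hasDerivAt S u m j).mul (hxj u hu0 j)
    have hcancel : ∑ j, (Phi S (-u) * S) m j * x u j
        = ∑ j, Phi S (-u) m j * (S *ᵥ x u) j := by
      have h1 : ((Phi S (-u) * S) *ᵥ x u) m = (Phi S (-u) *ᵥ (S *ᵥ x u)) m := by
        rw [Matrix.mulVec_mulVec]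
      simpa [Matrix.mulVec, dotProduct] using h1
    simp only [zero_sub]
    refine hder.congr_deriv ?_
    rw [Finset.sum_add_distrib]
    have hsplit : ∑ j, Phi S (-u) m j * ((S *ᵥ x u + g u) j)
        = (∑ j, Phi S (-u) m j * (S *ᵥ x u) j) + ∑ j, Phi S (-u) m j * g u j := by
      rw [← Finset.sum_add_distrib]
      refine Finset.sum_congr rfl fun j _ => ?_
      simp only [Pi.add_apply]
      ring
    have hneg : ∑ j, -((Phi S (-u) * S) m j) * x u j
        = -(∑ j, (Phi S (-u) * S) m j * x u j) := by
      rw [← Finset.sum_neg_distrib]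
      exact Finset.sum_congr rfl fun j _ => by ring
    rw [hsplit, hneg, hcancel]
    ring
  -- assembling
  have hinv : Phi S b * Phi S (-b) = 1 := by
    rw [← Phi_mul, add_neg_cancel, Phi_zero]
  have hxb : x b i = ∑ m, Phi S b i m * (∑ j, Phi S (-b) m j * x b j) := by
    have h1 : ((Phi S b * Phi S (-b)) *ᵥ x b) i = x b i := by
      rw [hinv, Matrix.one_mulVec]
    rw [← Matrix.mulVec_mulVec] at h1
    rw [← h1]
    simp [Matrix.mulVec, dotProduct]
  have hPhiba : Phi S b * Phi S (-a) = Phi S (b - a) := by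
    rw [← Phi_mul, ← sub_eq_add_neg]
  have hfirst : ∑ m, Phi S b i m * (∑ j, Phi S (-a) m j * x a j)
      = (Phi S (b - a) *ᵥ x a) i := by
    have h1 : ((Phi S b * Phi S (-a)) *ᵥ x a) i = (Phi S (b - a) *ᵥ x a) i := by
      rw [hPhiba]
    rw [← h1, ← Matrix.mulVec_mulVec]
    simp [Matrix.mulVec, dotProduct]
  have hsecond : ∑ m, Phi S b i m * (∫ s in a..b, ∑ j, Phi S (0 - s) m j * g s j)
      = ∫ s in a..b, ∑ j, Phi S (b - s) i j * g s j := by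
    have h1 : ∀ m : Fin N, Phi S b i m * (∫ s in a..b, ∑ j, Phi S (0 - s) m j * g s j)
        = ∫ s in a..b, Phi S b i m * ∑ j, Phi S (0 - s) m j * g s j := by
      intro m
      rw [intervalIntegral.integral_const_mul]
    have hint : ∀ m ∈ Finset.univ,
        IntervalIntegrable (fun s => Phi S b i m * ∑ j, Phi S (0 - s) m j * g s j)
          volume a b :=
      fun m _ => (phi_g_integrable g hgm K lg hlg hg ha hab 0 m).const_mul _
    rw [Finset.sum_congr rfl fun m _ => h1 m, ← intervalIntegral.integral_finset_sum hint]
    refine intervalIntegral.integral_congr fun s hs => ?_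
    have h2 : Phi S b * Phi S (0 - s) = Phi S (b - s) := by
      rw [← Phi_mul]
      ring_nf
    calc ∑ m, Phi S b i m * ∑ j, Phi S (0 - s) m j * g s j
        = ∑ m, ∑ j, Phi S b i m * (Phi S (0 - s) m j * g s j) := by
          refine Finset.sum_congr rfl fun m _ => Finset.mul_sum _ _ _
      _ = ∑ j, ∑ m, Phi S b i m * (Phi S (0 - s) m j * g s j) := Finset.sum_comm
      _ = ∑ j, (∑ m, Phi S b i m * Phi S (0 - s) m j) * g s j := by
          refine Finset.sum_congr rfl fun j _ => ?_
          rw [Finset.sum_mul]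
          refine Finset.sum_congr rfl fun m _ => by ring
      _ = ∑ j, Phi S (b - s) i j * g s j := by
          refine Finset.sum_congr rfl fun j _ => ?_
          rw [← h2, Matrix.mul_apply]
  calc x b i = ∑ m, Phi S b i m * (∑ j, Phi S (-b) m j * x b j) := hxb
    _ = ∑ m, Phi S b i m * ((∑ j, Phi S (-a) m j * x a j)
          + ∫ s in a..b, ∑ j, Phi S (0 - s) m j * g s j) := by
        refine Finset.sum_congr rfl fun m _ => ?_
        rw [hFTC m]
        ring_nf
    _ = (∑ m, Phi S b i m * (∑ j, Phi S (-a) m j * x a j))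
          + ∑ m, Phi S b i m * (∫ s in a..b, ∑ j, Phi S (0 - s) m j * g s j) := by
        rw [← Finset.sum_add_distrib]
        refine Finset.sum_congr rfl fun m _ => ?_
        ring
    _ = (Phi S (b - a) *ᵥ x a) i + ∫ s in a..b, ∑ j, Phi S (b - s) i j * g s j := by
        rw [hfirst, hsecond]

end Repr

section Stochastic

variable [Nonempty (Fin N)]


noncomputable def vsup (x : Fin N → ℝ) : ℝ := Finset.univ.sup' Finset.univ_nonempty x
noncomputable def vinf (x : Fin N → ℝ) : ℝ := Finset.univ.inf' Finset.univ_nonempty x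

lemma le_vsup (x : Fin N → ℝ) (i : Fin N) : x i ≤ vsup x :=
  Finset.le_sup' x (Finset.mem_univ i)

lemma vinf_le (x : Fin N → ℝ) (i : Fin N) : vinf x ≤ x i :=
  Finset.inf'_le x (Finset.mem_univ i)

lemma vinf_le_vsup (x : Fin N → ℝ) : vinf x ≤ vsup x :=
  le_trans (vinf_le x (Classical.arbitrary _)) (le_vsup x _)

lemma vsup_le {x : Fin N → ℝ} {a : ℝ} (h : ∀ i, x i ≤ a) : vsup x ≤ a :=
  Finset.sup'_le _ _ fun i _ => h i

lemma le_vinf {x : Fin N → ℝ} {a : ℝ} (h : ∀ i, a ≤ x i) : a ≤ vinf x :=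
  Finset.le_inf' _ _ fun i _ => h i

variable {P : Matrix (Fin N) (Fin N) ℝ}

section Stoch

variable (hP0 : ∀ i j, 0 ≤ P i j) (hP1 : ∀ i, ∑ j, P i j = 1)

include hP0 hP1

lemma stoch_sum_le_vsup (x : Fin N → ℝ) (i : Fin N) : ∑ j, P i j * x j ≤ vsup x := by
  calc ∑ j, P i j * x j ≤ ∑ j, P i j * vsup x :=
        Finset.sum_le_sum fun j _ => mul_le_mul_of_nonneg_left (le_vsup x j) (hP0 i j)
    _ = vsup x := by rw [← Finset.sum_mul, hP1, one_mul]

lemma vinf_le_stoch_sum (x : Fin N → ℝ) (i : Fin N) : vinf x ≤ ∑ j, P i j * x j := by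
  calc vinf x = ∑ j, P i j * vinf x := by rw [← Finset.sum_mul, hP1, one_mul]
    _ ≤ ∑ j, P i j * x j :=
        Finset.sum_le_sum fun j _ => mul_le_mul_of_nonneg_left (vinf_le x j) (hP0 i j)

variable {r : Fin N} {δ : ℝ} (hδ : ∀ i, δ ≤ P i r)

include hδ

lemma scramble_up (x : Fin N → ℝ) (i : Fin N) :
    ∑ j, P i j * x j ≤ vsup x - δ * (vsup x - x r) := by
  have h1 : P i r * x r + ∑ j ∈ Finset.univ.erase r, P i j * x j = ∑ j, P i j * x j :=
    Finset.add_sum_erase Finset.univ (fun j => P i j * x j) (Finset.mem_univ r)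
  have h3 : P i r + ∑ j ∈ Finset.univ.erase r, P i j = 1 := by
    rw [Finset.add_sum_erase Finset.univ (fun j => P i j) (Finset.mem_univ r)]; exact hP1 i
  have h2 : ∑ j ∈ Finset.univ.erase r, P i j * x j
      ≤ (∑ j ∈ Finset.univ.erase r, P i j) * vsup x := by
    rw [Finset.sum_mul]
    exact Finset.sum_le_sum fun j _ => mul_le_mul_of_nonneg_left (le_vsup x j) (hP0 i j)
  have hxr : x r ≤ vsup x := le_vsup x r
  have hir : δ ≤ P i r := hδ i
  have hE : (∑ j ∈ Finset.univ.erase r, P i j) = 1 - P i r := by linarith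
  rw [hE] at h2
  nlinarith [mul_nonneg (sub_nonneg.2 hir) (sub_nonneg.2 hxr)]

lemma scramble_down (x : Fin N → ℝ) (i : Fin N) :
    vinf x + δ * (x r - vinf x) ≤ ∑ j, P i j * x j := by
  have h1 : P i r * x r + ∑ j ∈ Finset.univ.erase r, P i j * x j = ∑ j, P i j * x j :=
    Finset.add_sum_erase Finset.univ (fun j => P i j * x j) (Finset.mem_univ r)
  have h3 : P i r + ∑ j ∈ Finset.univ.erase r, P i j = 1 := by
    rw [Finset.add_sum_erase Finset.univ (fun j => P i j) (Finset.mem_univ r)]; exact hP1 i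
  have h2 : (∑ j ∈ Finset.univ.erase r, P i j) * vinf x
      ≤ ∑ j ∈ Finset.univ.erase r, P i j * x j := by
    rw [Finset.sum_mul]
    exact Finset.sum_le_sum fun j _ => mul_le_mul_of_nonneg_left (vinf_le x j) (hP0 i j)
  have hxr : vinf x ≤ x r := vinf_le x r
  have hir : δ ≤ P i r := hδ i
  have hE : (∑ j ∈ Finset.univ.erase r, P i j) = 1 - P i r := by linarith
  rw [hE] at h2
  nlinarith [mul_nonneg (sub_nonneg.2 hir) (sub_nonneg.2 hxr)]

end Stoch

end Stochastic

section Main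

set_option maxHeartbeats 1000000 in
/-- Main convergence lemma for the perturbed consensus dynamics. -/
lemma consensus_main
    (S : Matrix (Fin N) (Fin N) ℝ)
    (hS0 : ∀ i j : Fin N, i ≠ j → 0 ≤ S i j)
    (hS1 : S *ᵥ (fun _ => (1:ℝ)) = 0)
    (r : Fin N)
    (hr : ∀ v, Relation.ReflTransGen (fun u w => u = w ∨ 0 < S w u) r v)
    (x g : ℝ → Fin N → ℝ)
    (hx : ∀ t : ℝ, 0 ≤ t → HasDerivAt x (S *ᵥ x t + g t) t)
    (hgm : AEStronglyMeasurable g (volume.restrict (Set.Ici (0:ℝ))))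
    (K lg : ℝ) (hKpos : 0 < K) (hlg : 0 < lg)
    (hg : ∀ t, 0 ≤ t → ∀ i, |g t i| ≤ K * Real.exp (-lg * t)) :
    ∃ xinf c mu : ℝ, 0 < c ∧ 0 < mu ∧
      ∀ t, 0 ≤ t → ∀ i, |x t i - xinf| ≤ c * Real.exp (-mu * t) := by
  haveI : Nonempty (Fin N) := ⟨r⟩
  -- stochasticity of Phi
  have hP0 : ∀ {t : ℝ}, 0 ≤ t → ∀ i j, 0 ≤ Phi S t i j := fun ht i j => Phi_nonneg hS0 ht i j
  have hP1 : ∀ {t : ℝ}, ∀ i, ∑ j, Phi S t i j = 1 := fun i => Phi_rowsum _ hS1 i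
  -- delta
  set δ : ℝ := vinf (fun i => Phi S 1 i r) with hδdef
  have hδpos : 0 < δ := by
    rw [hδdef]
    show (0:ℝ) < Finset.univ.inf' Finset.univ_nonempty fun i => Phi S 1 i r
    rw [Finset.lt_inf'_iff]
    exact fun i _ => Phi_one_pos hS0 (hr i)
  have hδle : ∀ i, δ ≤ Phi S 1 i r := fun i => vinf_le _ i
  have hδ1 : δ ≤ 1 := by
    have h1 : Phi S 1 r r ≤ ∑ j, Phi S 1 r j :=
      Finset.single_le_sum (fun j _ => hP0 zero_le_one r j) (Finset.mem_univ r)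
    have := hP1 (t := 1) r
    have := hδle r
    linarith
  -- the disturbance integral bound
  set K2 : ℝ := K / lg with hK2def
  have hK2pos : 0 < K2 := div_pos hKpos hlg
  set E : ℝ → ℝ := fun a => K2 * Real.exp (-lg * a) with hEdef
  have hEpos : ∀ a, 0 < E a := fun a => mul_pos hK2pos (Real.exp_pos _)
  have hExp : ∀ a b : ℝ, 0 ≤ a → a ≤ b →
      (∫ s in a..b, K * Real.exp (-lg * s)) ≤ E a := by
    intro a b ha hab
    have hanti : ∀ s ∈ Set.uIcc a b,
        HasDerivAt (fun u => -(K / lg) * Real.exp (-lg * u)) (K * Real.exp (-lg * s)) s := by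
      intro s _
      have h1 : HasDerivAt (fun u : ℝ => -lg * u) (-lg) s := by
        simpa using (hasDerivAt_id s).const_mul (-lg)
      have h2 := h1.exp
      have h3 := h2.const_mul (-(K / lg))
      refine h3.congr_deriv ?_
      rw [mul_comm (Real.exp _) (-lg), ← mul_assoc, neg_mul_neg, div_mul_cancel₀ K hlg.ne']
    have hint : IntervalIntegrable (fun s => K * Real.exp (-lg * s)) volume a b :=
      (Continuous.mul continuous_const
        ((Real.continuous_exp).comp (continuous_const.mul continuous_id))).intervalIntegrable a b
    rw [intervalIntegral.integral_eq_sub_of_hasDerivAt hanti hint]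
    have h6 : 0 < K / lg := div_pos hKpos hlg
    have h7 : 0 < (K / lg) * Real.exp (-lg * b) := mul_pos h6 (Real.exp_pos _)
    simp only [hEdef, hK2def]
    linarith
  have hIb : ∀ a b : ℝ, 0 ≤ a → a ≤ b → ∀ i,
      |∫ s in a..b, ∑ j, Phi S (b - s) i j * g s j| ≤ E a := by
    intro a b ha hab i
    have hbound : ∀ᵐ s ∂(volume.restrict (Set.uIoc a b)),
        ‖∑ j, Phi S (b - s) i j * g s j‖ ≤ K * Real.exp (-lg * s) := by
      refine (ae_restrict_iff' measurableSet_uIoc).2 (ae_of_all _ fun s hs => ?_)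
      have hs' : s ∈ Set.Ioc a b := by rwa [Set.uIoc_of_le hab] at hs
      have hs0 : 0 ≤ s := le_trans ha (le_of_lt hs'.1)
      have hbs : (0:ℝ) ≤ b - s := sub_nonneg.2 hs'.2
      rw [Real.norm_eq_abs]
      calc |∑ j, Phi S (b - s) i j * g s j| ≤ ∑ j, |Phi S (b - s) i j * g s j| :=
            Finset.abs_sum_le_sum_abs _ _
        _ ≤ ∑ j, Phi S (b - s) i j * (K * Real.exp (-lg * s)) := by
            refine Finset.sum_le_sum fun j _ => ?_
            rw [abs_mul, abs_of_nonneg (hP0 hbs i j)]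
            exact mul_le_mul_of_nonneg_left (hg s hs0 j) (hP0 hbs i j)
        _ = (∑ j, Phi S (b - s) i j) * (K * Real.exp (-lg * s)) := by rw [Finset.sum_mul]
        _ = K * Real.exp (-lg * s) := by rw [hP1]; ring
    have h2 := intervalIntegral.norm_integral_le_of_norm_le (g := fun s => K * Real.exp (-lg * s)) hab
      (by rw [Set.uIoc_of_le hab] at hbound; exact (ae_restrict_iff' measurableSet_Ioc).1 hbound)
      ((Continuous.mul continuous_const
        ((Real.continuous_exp).comp (continuous_const.mul continuous_id))).intervalIntegrable a b)
    rw [Real.norm_eq_abs] at h2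
    have hnn : 0 ≤ ∫ s in a..b, K * Real.exp (-lg * s) :=
      intervalIntegral.integral_nonneg hab fun s _ =>
        mul_nonneg (le_of_lt hKpos) (le_of_lt (Real.exp_pos _))
    exact le_trans h2 (hExp a b ha hab)
  have hDnonneg : ∀ t : ℝ, 0 ≤ vsup (x t) - vinf (x t) :=
    fun t => sub_nonneg.2 (vinf_le_vsup (x t))
  -- propagation inequalities
  have hrepr : ∀ a b : ℝ, 0 ≤ a → a ≤ b → ∀ i,
      x b i = (Phi S (b - a) *ᵥ x a) i + ∫ s in a..b, ∑ j, Phi S (b - s) i j * g s j :=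
    fun a b ha hab i => repr_formula x g hx hgm K lg hlg hg ha hab i
  have hup : ∀ a b : ℝ, 0 ≤ a → a ≤ b → ∀ i, x b i ≤ vsup (x a) + E a := by
    intro a b ha hab i
    rw [hrepr a b ha hab i]
    have h1 : (Phi S (b - a) *ᵥ x a) i ≤ vsup (x a) := by
      have := stoch_sum_le_vsup (P := Phi S (b - a)) (hP0 (sub_nonneg.2 hab)) hP1 (x a) i
      simpa [Matrix.mulVec, dotProduct] using this
    have h2 := abs_le.1 (hIb a b ha hab i)
    linarith [h2.2]
  have hdown : ∀ a b : ℝ, 0 ≤ a → a ≤ b → ∀ i, vinf (x a) - E a ≤ x b i := by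
    intro a b ha hab i
    rw [hrepr a b ha hab i]
    have h1 : vinf (x a) ≤ (Phi S (b - a) *ᵥ x a) i := by
      have := vinf_le_stoch_sum (P := Phi S (b - a)) (hP0 (sub_nonneg.2 hab)) hP1 (x a) i
      simpa [Matrix.mulVec, dotProduct] using this
    have h2 := abs_le.1 (hIb a b ha hab i)
    linarith [h2.1]
  have hMup : ∀ a b : ℝ, 0 ≤ a → a ≤ b → vsup (x b) ≤ vsup (x a) + E a :=
    fun a b ha hab => vsup_le fun i => hup a b ha hab i
  have hmdown : ∀ a b : ℝ, 0 ≤ a → a ≤ b → vinf (x a) - E a ≤ vinf (x b) :=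
    fun a b ha hab => le_vinf fun i => hdown a b ha hab i
  -- contraction step
  have hstep : ∀ a : ℝ, 0 ≤ a →
      vsup (x (a+1)) - vinf (x (a+1)) ≤ (1 - δ) * (vsup (x a) - vinf (x a)) + 2 * E a := by
    intro a ha
    have hab : a ≤ a + 1 := by linarith
    have hone : a + 1 - a = (1:ℝ) := by ring
    have hMs : vsup (x (a+1)) ≤ (vsup (x a) - δ * (vsup (x a) - x a r)) + E a := by
      refine vsup_le fun i => ?_
      rw [hrepr a (a+1) ha hab i]
      have h1 : (Phi S (a + 1 - a) *ᵥ x a) i ≤ vsup (x a) - δ * (vsup (x a) - x a r) := by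
        rw [hone]
        have := scramble_up (P := Phi S 1) (hP0 zero_le_one) hP1 hδle (x a) i
        simpa [Matrix.mulVec, dotProduct] using this
      have h2 := abs_le.1 (hIb a (a+1) ha hab i)
      linarith [h2.2]
    have hms : (vinf (x a) + δ * (x a r - vinf (x a))) - E a ≤ vinf (x (a+1)) := by
      refine le_vinf fun i => ?_
      rw [hrepr a (a+1) ha hab i]
      have h1 : vinf (x a) + δ * (x a r - vinf (x a)) ≤ (Phi S (a + 1 - a) *ᵥ x a) i := by
        rw [hone]
        have := scramble_down (P := Phi S 1) (hP0 zero_le_one) hP1 hδle (x a) i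
        simpa [Matrix.mulVec, dotProduct] using this
      have h2 := abs_le.1 (hIb a (a+1) ha hab i)
      linarith [h2.1]
    nlinarith [hMs, hms]
  -- geometric decay of the diameter along integers
  set ρ : ℝ := 1 - δ with hρdef
  have hρ0 : 0 ≤ ρ := by rw [hρdef]; linarith
  have hρ1 : ρ < 1 := by rw [hρdef]; linarith
  set θ : ℝ := max ρ (Real.exp (-lg)) with hθdef
  have hθ0 : 0 < θ := lt_of_lt_of_le (Real.exp_pos (-lg)) (le_max_right _ _)
  have hθ1 : θ < 1 := by
    rw [hθdef]
    apply max_lt hρ1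
    rw [Real.exp_lt_one_iff]
    linarith
  set θ' : ℝ := (1 + θ) / 2 with hθ'def
  have hθθ' : θ < θ' := by rw [hθ'def]; linarith
  have hθ'0 : 0 < θ' := lt_trans hθ0 hθθ'
  have hθ'1 : θ' < 1 := by rw [hθ'def]; linarith
  have hρθ' : ρ < θ' := lt_of_le_of_lt (le_max_left _ _) hθθ'
  have hexpθ' : Real.exp (-lg) ≤ θ' := le_of_lt (lt_of_le_of_lt (le_max_right _ _) hθθ')
  set Cd : ℝ := max (vsup (x 0) - vinf (x 0)) (2 * K2 / (θ' - ρ)) with hCddef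
  have hCd0 : 0 ≤ Cd := le_trans (hDnonneg 0) (le_max_left _ _)
  have hEnat : ∀ n : ℕ, E n = K2 * Real.exp (-lg) ^ n := by
    intro n
    simp only [hEdef]
    rw [mul_comm (-lg) (n:ℝ), Real.exp_nat_mul]
  have hEθ' : ∀ n : ℕ, E n ≤ K2 * θ' ^ n := by
    intro n
    rw [hEnat n]
    exact mul_le_mul_of_nonneg_left
      (pow_le_pow_left₀ (le_of_lt (Real.exp_pos _)) hexpθ' n) (le_of_lt hK2pos)
  have hDn : ∀ n : ℕ, vsup (x n) - vinf (x n) ≤ Cd * θ' ^ n := by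
    intro n
    induction n with
    | zero =>
      have h0 := le_max_left (vsup (x 0) - vinf (x 0)) (2 * K2 / (θ' - ρ))
      rw [← hCddef] at h0
      simpa using h0
    | succ n ih =>
      have hn0 : (0:ℝ) ≤ (n:ℝ) := Nat.cast_nonneg n
      have h1 := hstep (n:ℝ) hn0
      have hcast : ((n:ℝ) + 1) = ((n+1 : ℕ):ℝ) := by push_cast; ring
      rw [hcast] at h1
      have h2 : ρ * (vsup (x n) - vinf (x n)) ≤ ρ * (Cd * θ' ^ n) :=
        mul_le_mul_of_nonneg_left ih hρ0
      have h3 : E n ≤ K2 * θ' ^ n := hEθ' n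
      have h4 : 2 * K2 ≤ Cd * (θ' - ρ) := by
        have h5 := le_max_right (vsup (x 0) - vinf (x 0)) (2 * K2 / (θ' - ρ))
        rw [← hCddef] at h5
        rw [div_le_iff₀ (by linarith : (0:ℝ) < θ' - ρ)] at h5
        linarith
      have hpow : (0:ℝ) ≤ θ' ^ n := pow_nonneg (le_of_lt hθ'0) n
      have h6 := mul_le_mul_of_nonneg_right h4 hpow
      calc vsup (x (n+1:ℕ)) - vinf (x (n+1:ℕ))
          ≤ ρ * (vsup (x n) - vinf (x n)) + 2 * E n := h1
        _ ≤ ρ * (Cd * θ' ^ n) + 2 * (K2 * θ' ^ n) := by linarith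
        _ ≤ Cd * θ' ^ (n+1) := by rw [pow_succ]; nlinarith [h6]
  -- Cauchy sequence of minima
  have hdist : ∀ n : ℕ, dist (vinf (x n)) (vinf (x (n+1:ℕ))) ≤ (Cd + K2) * θ' ^ n := by
    intro n
    have hn0 : (0:ℝ) ≤ (n:ℝ) := Nat.cast_nonneg n
    have hnn1 : (n:ℝ) ≤ ((n+1:ℕ):ℝ) := by push_cast; linarith
    have h1 : vinf (x n) - E n ≤ vinf (x (n+1:ℕ)) := hmdown n (n+1:ℕ) hn0 hnn1
    have h2 : vinf (x (n+1:ℕ)) ≤ vsup (x (n+1:ℕ)) := vinf_le_vsup _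
    have h3 : vsup (x (n+1:ℕ)) ≤ vsup (x n) + E n := hMup n (n+1:ℕ) hn0 hnn1
    have h4 : E n ≤ K2 * θ' ^ n := hEθ' n
    have h5 := hDn n
    have h6 := hEpos (n:ℝ)
    rw [Real.dist_eq, abs_le]
    constructor <;> nlinarith
  have hcauchy : CauchySeq (fun n : ℕ => vinf (x n)) :=
    cauchySeq_of_le_geometric θ' (Cd + K2) hθ'1 hdist
  obtain ⟨xinf, hxinf⟩ := cauchySeq_tendsto_of_complete hcauchy
  -- xinf lies in all the intervals
  have hxinf_lb : ∀ n : ℕ, vinf (x n) - E n ≤ xinf := by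
    intro n
    refine ge_of_tendsto hxinf (eventually_atTop.2 ⟨n, fun n' hn' => ?_⟩)
    have hnn' : (n:ℝ) ≤ (n':ℝ) := Nat.cast_le.2 hn'
    exact hmdown n n' (Nat.cast_nonneg n) hnn'
  have hxinf_ub : ∀ n : ℕ, xinf ≤ vsup (x n) + E n := by
    intro n
    refine le_of_tendsto hxinf (eventually_atTop.2 ⟨n, fun n' hn' => ?_⟩)
    have hnn' : (n:ℝ) ≤ (n':ℝ) := Nat.cast_le.2 hn'
    have h1 : vinf (x n') ≤ vsup (x n') := vinf_le_vsup _
    have h2 : vsup (x n') ≤ vsup (x n) + E n := hMup n n' (Nat.cast_nonneg n) hnn'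
    linarith
  -- final bound
  set mu : ℝ := -Real.log θ' with hmudef
  have hmupos : 0 < mu := by
    rw [hmudef, neg_pos]
    exact Real.log_neg hθ'0 hθ'1
  set c : ℝ := (Cd + 2 * K2) / θ' with hcdef
  have hcpos : 0 < c := div_pos (by linarith) hθ'0
  refine ⟨xinf, c, mu, hcpos, hmupos, fun t ht i => ?_⟩
  set n : ℕ := ⌊t⌋₊ with hndef
  have hn1 : (n:ℝ) ≤ t := Nat.floor_le ht
  have hn2 : t < (n:ℝ) + 1 := Nat.lt_floor_add_one t
  have hxt_ub : x t i ≤ vsup (x n) + E n := hup n t (Nat.cast_nonneg n) hn1 i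
  have hxt_lb : vinf (x n) - E n ≤ x t i := hdown n t (Nat.cast_nonneg n) hn1 i
  have habs : |x t i - xinf| ≤ (vsup (x n) - vinf (x n)) + 2 * E n := by
    have h1 := hxinf_lb n
    have h2 := hxinf_ub n
    rw [abs_le]
    constructor <;> nlinarith
  have h4 : E n ≤ K2 * θ' ^ n := hEθ' n
  have h5 := hDn n
  have hθ'pow : θ' ^ n ≤ Real.exp (-mu * t) / θ' := by
    have hlog : θ' ^ n = Real.exp ((n:ℝ) * Real.log θ') := by
      rw [Real.exp_nat_mul, Real.exp_log hθ'0]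
    have hle : (n:ℝ) * Real.log θ' ≤ (t - 1) * Real.log θ' := by
      have hlogneg : Real.log θ' < 0 := Real.log_neg hθ'0 hθ'1
      nlinarith
    have h6 : Real.exp ((t - 1) * Real.log θ') = Real.exp (-mu * t) / θ' := by
      rw [show (t - 1) * Real.log θ' = -mu * t + mu by rw [hmudef]; ring]
      rw [Real.exp_add, hmudef, Real.exp_neg, Real.exp_log hθ'0, div_eq_mul_inv]
    calc θ' ^ n = Real.exp ((n:ℝ) * Real.log θ') := hlog
      _ ≤ Real.exp ((t - 1) * Real.log θ') := Real.exp_le_exp.2 hle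
      _ = Real.exp (-mu * t) / θ' := h6
  calc |x t i - xinf| ≤ (vsup (x n) - vinf (x n)) + 2 * E n := habs
    _ ≤ (Cd + 2 * K2) * θ' ^ n := by linarith
    _ ≤ (Cd + 2 * K2) * (Real.exp (-mu * t) / θ') := by
        refine mul_le_mul_of_nonneg_left hθ'pow ?_
        linarith
    _ = c * Real.exp (-mu * t) := by rw [hcdef]; field_simp

end Main

end FormationAux

open FormationAux MeasureTheory

lemma mnorm_entry_le {M : Matrix (Fin 3) (Fin 3) ℝ} (k m : Fin 3) : |M k m| ≤ mnorm M := by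
  rw [mnorm, ← Real.sqrt_sq_eq_abs]
  apply Real.sqrt_le_sqrt
  calc M k m ^ 2 ≤ ∑ m', M k m' ^ 2 :=
        Finset.single_le_sum (f := fun m' => M k m' ^ 2)
          (fun m' _ => sq_nonneg _) (Finset.mem_univ m)
    _ ≤ ∑ k', ∑ m', M k' m' ^ 2 :=
        Finset.single_le_sum (f := fun k' => ∑ m', M k' m' ^ 2)
          (fun k' _ => Finset.sum_nonneg fun m' _ => sq_nonneg _) (Finset.mem_univ k)

set_option maxHeartbeats 1000000 in
/-- under the formation control law with exponentially convergent orientation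
estimates, the positions converge globally exponentially to the desired formation up to the
common rotation `C*` and a common translation `p_∞`; in particular the relative positions
converge to the rotated desired relative positions. -/
theorem formation_control_convergence
    (N : ℕ)
    (C : Fin N → Matrix (Fin 3) (Fin 3) ℝ)
    (hC : ∀ i, (C i)ᵀ * C i = 1) (hCdet : ∀ i, (C i).det = 1)
    (l : Fin N → Fin N → ℝ) (hl : ∀ i j, 0 ≤ l i j)
    (hroot : hasRootedOutBranch l)
    (pstar : Fin N → Fin 3 → ℝ)
    (ku : ℝ) (hku : 0 < ku)
    (Chat : Fin N → ℝ → Matrix (Fin 3) (Fin 3) ℝ)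
    (Cstar : Matrix (Fin 3) (Fin 3) ℝ)
    (kw lw : ℝ) (hkw : 0 < kw) (hlw : 0 < lw)
    (hest : ∀ i, ∀ t : ℝ, 0 ≤ t →
      mnorm ((C i)ᵀ * Chat i t - Cstar) ≤ kw * Real.exp (-lw * t))
    (p : Fin N → ℝ → Fin 3 → ℝ)
    (hode : ∀ i, ∀ t : ℝ, 0 ≤ t →
      HasDerivAt (p i)
        (ku • ∑ j ∈ Finset.univ.filter (fun j => 0 < l i j),
          l i j • ((p j t - p i t) - ((C i)ᵀ * Chat i t).mulVec (pstar j - pstar i))) t) :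
    (∃ pinf : Fin 3 → ℝ, ∃ c > (0 : ℝ), ∃ lam > (0 : ℝ),
        ∀ i, ∀ t : ℝ, 0 ≤ t →
          _root_.enorm (p i t - (Cstar.mulVec (pstar i) + pinf)) ≤ c * Real.exp (-lam * t)) ∧
    (∀ i j, Tendsto (fun t => p j t - p i t) atTop
        (nhds (Cstar.mulVec (pstar j - pstar i)))) := by
  classical
  obtain ⟨r, hroot⟩ := hroot
  haveI : Nonempty (Fin N) := ⟨r⟩
  -- the system matrix
  set S : Matrix (Fin N) (Fin N) ℝ :=
    Matrix.of (fun i j => ku * l i j - (if i = j then ku * ∑ m, l i m else 0)) with hSdef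
  have hSapp : ∀ i j, S i j = ku * l i j - (if i = j then ku * ∑ m, l i m else 0) :=
    fun i j => rfl
  have hS0 : ∀ i j, i ≠ j → 0 ≤ S i j := by
    intro i j hij
    rw [hSapp, if_neg hij, sub_zero]
    exact mul_nonneg hku.le (hl i j)
  have hS1 : S *ᵥ (fun _ => (1:ℝ)) = 0 := by
    funext i
    simp only [Matrix.mulVec, dotProduct, mul_one, Pi.zero_apply]
    rw [Finset.sum_congr rfl fun j _ => hSapp i j, Finset.sum_sub_distrib]
    simp [Finset.sum_ite_eq, Finset.mul_sum]
  have hr : ∀ v, Relation.ReflTransGen (fun u w => u = w ∨ 0 < S w u) r v := by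
    intro v
    refine Relation.ReflTransGen.mono ?_ _ _ (hroot v)
    intro u w h
    by_cases huw : u = w
    · exact Or.inl huw
    · right
      rw [hSapp, if_neg (Ne.symm huw), sub_zero]
      exact mul_pos hku h
  -- coordinates
  set X : Fin 3 → ℝ → Fin N → ℝ :=
    fun k t i => p i t k - Cstar.mulVec (pstar i) k with hXdef
  -- the derivative formula per coordinate
  set V : Fin 3 → ℝ → Fin N → ℝ :=
    fun k t i => ku * ∑ j ∈ Finset.univ.filter (fun j => 0 < l i j),
      l i j * ((p j t k - p i t k)
        - (((C i)ᵀ * Chat i t).mulVec (pstar j - pstar i)) k) with hVdef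
  have hDX : ∀ (k : Fin 3) (t : ℝ), 0 ≤ t → HasDerivAt (X k) (V k t) t := by
    intro k t ht
    refine hasDerivAt_pi.2 fun i => ?_
    have h1 := hasDerivAt_pi.1 (hode i t ht) k
    have h2 := h1.sub_const (Cstar.mulVec (pstar i) k)
    convert h2 using 1
    simp only [hVdef, Finset.sum_apply, Pi.smul_apply, Pi.sub_apply, smul_eq_mul,
      Finset.mul_sum]
  -- the disturbance
  set G : Fin 3 → ℝ → Fin N → ℝ :=
    fun k t => deriv (X k) t - S *ᵥ (X k t) with hGdef
  have hXode : ∀ (k : Fin 3) (t : ℝ), 0 ≤ t →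
      HasDerivAt (X k) (S *ᵥ (X k t) + G k t) t := by
    intro k t ht
    have h1 := hDX k t ht
    have h2 : deriv (X k) t = V k t := h1.deriv
    have h3 : S *ᵥ (X k t) + G k t = V k t := by
      rw [hGdef]
      simp only []
      rw [h2]
      abel
    rw [h3]
    exact h1
  -- value of the disturbance for nonnegative times
  have hGval : ∀ (k : Fin 3) (t : ℝ), 0 ≤ t → ∀ i,
      G k t i = ku * ∑ j, l i j *
        (((Cstar - (C i)ᵀ * Chat i t) *ᵥ (pstar j - pstar i)) k) := by
    intro k t ht i
    have h2 : deriv (X k) t = V k t := (hDX k t ht).deriv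
    have hGi : G k t i = V k t i - (S *ᵥ (X k t)) i := by
      rw [hGdef]; simp only [Pi.sub_apply]; rw [h2]
    rw [hGi]
    -- extend the filtered sum to the full sum
    have hVfull : V k t i = ku * ∑ j, l i j * ((p j t k - p i t k)
        - (((C i)ᵀ * Chat i t).mulVec (pstar j - pstar i)) k) := by
      rw [hVdef]
      simp only []
      congr 1
      refine Finset.sum_subset (Finset.filter_subset _ _) fun j _ hj => ?_
      have h0 : l i j = 0 := le_antisymm (not_lt.1 (by simpa using hj)) (hl i j)
      rw [h0, zero_mul]
    rw [hVfull]
    -- expand (S *ᵥ X) i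
    have hSX : (S *ᵥ (X k t)) i = ku * ∑ j, l i j * ((p j t k - p i t k)
        - (Cstar.mulVec (pstar j - pstar i)) k) := by
      have h2 : ∀ j, S i j * X k t j
          = ku * (l i j * X k t j) - (if i = j then (ku * ∑ m, l i m) * X k t j else 0) := by
        intro j
        rw [hSapp i j]
        by_cases hij : i = j <;> simp [hij] <;> ring
      have hmv : (S *ᵥ (X k t)) i = ∑ j, S i j * X k t j := by
        simp [Matrix.mulVec, dotProduct]
      have hC : (ku * ∑ m, l i m) * X k t i = ∑ m, ku * (l i m * X k t i) := by
        rw [mul_assoc, Finset.sum_mul, Finset.mul_sum]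
      have hT : ∀ j, l i j * ((p j t k - p i t k) - (Cstar.mulVec (pstar j - pstar i)) k)
          = l i j * X k t j - l i j * X k t i := by
        intro j
        have hXj : X k t j = p j t k - Cstar.mulVec (pstar j) k := rfl
        have hXi : X k t i = p i t k - Cstar.mulVec (pstar i) k := rfl
        rw [Matrix.mulVec_sub]
        simp only [Pi.sub_apply]
        rw [hXj, hXi]
        ring
      rw [hmv, Finset.sum_congr rfl fun j _ => h2 j, Finset.sum_sub_distrib,
        Finset.sum_ite_eq Finset.univ i (fun j => (ku * ∑ m, l i m) * X k t j)]
      simp only [Finset.mem_univ, if_pos]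
      rw [hC, Finset.sum_congr rfl fun j _ => hT j, Finset.mul_sum]
      rw [Finset.sum_congr rfl fun j _ => mul_sub ku (l i j * X k t j) (l i j * X k t i),
        Finset.sum_sub_distrib]
    rw [hSX, ← mul_sub, ← Finset.sum_sub_distrib]
    congr 1
    refine Finset.sum_congr rfl fun j _ => ?_
    rw [Matrix.sub_mulVec]
    simp only [Pi.sub_apply]
    ring
  -- bound on the disturbance
  set Kg : ℝ := 1 + ku * kw * ∑ i, ∑ j, l i j * ∑ m, |pstar j m - pstar i m| with hKgdef
  have hKgpos : 0 < Kg := by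
    have h1 : 0 ≤ ∑ i, ∑ j, l i j * ∑ m, |pstar j m - pstar i m| :=
      Finset.sum_nonneg fun i _ => Finset.sum_nonneg fun j _ =>
        mul_nonneg (hl i j) (Finset.sum_nonneg fun m _ => abs_nonneg _)
    rw [hKgdef]
    nlinarith [mul_pos hku hkw]
  have hGbound : ∀ (k : Fin 3) (t : ℝ), 0 ≤ t → ∀ i,
      |G k t i| ≤ Kg * Real.exp (-lw * t) := by
    intro k t ht i
    rw [hGval k t ht i]
    have hexp0 : 0 < Real.exp (-lw * t) := Real.exp_pos _
    have hterm : ∀ j, |l i j * (((Cstar - (C i)ᵀ * Chat i t) *ᵥ (pstar j - pstar i)) k)|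
        ≤ l i j * ((kw * Real.exp (-lw * t)) * ∑ m, |pstar j m - pstar i m|) := by
      intro j
      rw [abs_mul, abs_of_nonneg (hl i j)]
      refine mul_le_mul_of_nonneg_left ?_ (hl i j)
      have hmv : (((Cstar - (C i)ᵀ * Chat i t) *ᵥ (pstar j - pstar i)) k)
          = ∑ m, (Cstar - (C i)ᵀ * Chat i t) k m * (pstar j m - pstar i m) := by
        simp [Matrix.mulVec, dotProduct]
      rw [hmv]
      have hentry : ∀ m, |(Cstar - (C i)ᵀ * Chat i t) k m| ≤ kw * Real.exp (-lw * t) := by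
        intro m
        have h1 := mnorm_entry_le (M := (C i)ᵀ * Chat i t - Cstar) k m
        have h2 : (Cstar - (C i)ᵀ * Chat i t) k m = -(((C i)ᵀ * Chat i t - Cstar) k m) := by
          simp [Matrix.sub_apply]
        rw [h2, abs_neg]
        exact le_trans h1 (hest i t ht)
      calc |∑ m, (Cstar - (C i)ᵀ * Chat i t) k m * (pstar j m - pstar i m)|
          ≤ ∑ m, |(Cstar - (C i)ᵀ * Chat i t) k m * (pstar j m - pstar i m)| :=
            Finset.abs_sum_le_sum_abs _ _
        _ ≤ ∑ m, (kw * Real.exp (-lw * t)) * |pstar j m - pstar i m| := by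
            refine Finset.sum_le_sum fun m _ => ?_
            rw [abs_mul]
            exact mul_le_mul_of_nonneg_right (hentry m) (abs_nonneg _)
        _ = (kw * Real.exp (-lw * t)) * ∑ m, |pstar j m - pstar i m| := by
            rw [Finset.mul_sum]
    calc |ku * ∑ j, l i j * (((Cstar - (C i)ᵀ * Chat i t) *ᵥ (pstar j - pstar i)) k)|
        ≤ ku * ∑ j, |l i j * (((Cstar - (C i)ᵀ * Chat i t) *ᵥ (pstar j - pstar i)) k)| := by
          rw [abs_mul, abs_of_nonneg hku.le]
          exact mul_le_mul_of_nonneg_left (Finset.abs_sum_le_sum_abs _ _) hku.le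
      _ ≤ ku * ∑ j, l i j * ((kw * Real.exp (-lw * t)) * ∑ m, |pstar j m - pstar i m|) :=
          mul_le_mul_of_nonneg_left (Finset.sum_le_sum fun j _ => hterm j) hku.le
      _ = (ku * kw * ∑ j, l i j * ∑ m, |pstar j m - pstar i m|) * Real.exp (-lw * t) := by
          rw [Finset.mul_sum, Finset.mul_sum, Finset.sum_mul]
          refine Finset.sum_congr rfl fun j _ => by ring
      _ ≤ Kg * Real.exp (-lw * t) := by
          refine mul_le_mul_of_nonneg_right ?_ hexp0.le
          rw [hKgdef]
          have h1 : ∑ j, l i j * ∑ m, |pstar j m - pstar i m|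
              ≤ ∑ i', ∑ j, l i' j * ∑ m, |pstar j m - pstar i' m| :=
            Finset.single_le_sum
              (f := fun i' => ∑ j, l i' j * ∑ m, |pstar j m - pstar i' m|)
              (fun i' _ => Finset.sum_nonneg fun j _ =>
                mul_nonneg (hl i' j) (Finset.sum_nonneg fun m _ => abs_nonneg _))
              (Finset.mem_univ i)
          nlinarith [mul_pos hku hkw, mul_le_mul_of_nonneg_left h1 (mul_pos hku hkw).le]
  -- measurability of the disturbance
  have hXcont : ∀ k, ContinuousOn (X k) (Set.Ici (0:ℝ)) := by
    intro k
    intro t ht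
    exact ((hDX k t ht).continuousAt).continuousWithinAt
  have hGmeas : ∀ k, AEStronglyMeasurable (G k) (volume.restrict (Set.Ici (0:ℝ))) := by
    intro k
    rw [hGdef]
    apply AEStronglyMeasurable.sub
    · exact (measurable_deriv (X k)).aestronglyMeasurable
    · have hmv : Continuous fun v : Fin N → ℝ => S *ᵥ v := by
        have := LinearMap.continuous_of_finiteDimensional (Matrix.mulVecLin S)
        exact this
      exact (hmv.comp_continuousOn (hXcont k)).aestronglyMeasurable measurableSet_Ici
  -- apply the main convergence lemma per coordinate
  have hmain : ∀ k : Fin 3, ∃ xinf c mu : ℝ, 0 < c ∧ 0 < mu ∧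
      ∀ t, 0 ≤ t → ∀ i, |X k t i - xinf| ≤ c * Real.exp (-mu * t) :=
    fun k => consensus_main S hS0 hS1 r hr (X k) (G k) (hXode k) (hGmeas k)
      Kg lw hKgpos hlw (hGbound k)
  choose xinf cc mm hcc hmm hbd using hmain
  set B : ℝ := cc 0 + cc 1 + cc 2 with hBdef
  have hBpos : 0 < B := by
    have := hcc 0; have := hcc 1; have := hcc 2
    rw [hBdef]; linarith
  set lam : ℝ := min (mm 0) (min (mm 1) (mm 2)) with hlamdef
  have hlampos : 0 < lam := lt_min (hmm 0) (lt_min (hmm 1) (hmm 2))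
  have hlamle : ∀ k : Fin 3, lam ≤ mm k := by
    intro k
    fin_cases k
    · exact min_le_left _ _
    · exact le_trans (min_le_right _ _) (min_le_left _ _)
    · exact le_trans (min_le_right _ _) (min_le_right _ _)
  have hcoord : ∀ (i : Fin N) (t : ℝ), 0 ≤ t → ∀ k : Fin 3,
      |(p i t - (Cstar.mulVec (pstar i) + xinf)) k| ≤ B * Real.exp (-lam * t) := by
    intro i t ht k
    have h1 : (p i t - (Cstar.mulVec (pstar i) + xinf)) k = X k t i - xinf k := by
      simp only [hXdef, Pi.sub_apply, Pi.add_apply]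
      ring
    rw [h1]
    have h2 := hbd k t ht i
    have h3 : Real.exp (-mm k * t) ≤ Real.exp (-lam * t) := by
      apply Real.exp_le_exp.2
      nlinarith [hlamle k]
    have h4 : cc k ≤ B := by
      have := hcc 0; have := hcc 1; have := hcc 2
      rw [hBdef]
      fin_cases k <;> simp <;> linarith
    calc |X k t i - xinf k| ≤ cc k * Real.exp (-mm k * t) := h2
      _ ≤ B * Real.exp (-lam * t) := by
          have := Real.exp_pos (-mm k * t)
          have := Real.exp_pos (-lam * t)
          nlinarith
  constructor
  · refine ⟨xinf, Real.sqrt 3 * B, by positivity, lam, hlampos, fun i t ht => ?_⟩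
    have h1 : _root_.enorm (p i t - (Cstar.mulVec (pstar i) + xinf))
        ≤ Real.sqrt (3 * (B * Real.exp (-lam * t))^2) := by
      rw [_root_.enorm]
      apply Real.sqrt_le_sqrt
      have h2 : ∀ k : Fin 3, (p i t - (Cstar.mulVec (pstar i) + xinf)) k ^ 2
          ≤ (B * Real.exp (-lam * t))^2 := by
        intro k
        have := hcoord i t ht k
        nlinarith [abs_nonneg ((p i t - (Cstar.mulVec (pstar i) + xinf)) k),
          sq_abs ((p i t - (Cstar.mulVec (pstar i) + xinf)) k)]
      calc ∑ k, (p i t - (Cstar.mulVec (pstar i) + xinf)) k ^ 2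
          ≤ ∑ _k : Fin 3, (B * Real.exp (-lam * t))^2 :=
            Finset.sum_le_sum fun k _ => h2 k
        _ = 3 * (B * Real.exp (-lam * t))^2 := by simp
    rw [Real.sqrt_mul (by norm_num : (0:ℝ) ≤ 3)] at h1
    rw [Real.sqrt_sq (by positivity : (0:ℝ) ≤ B * Real.exp (-lam * t))] at h1
    calc _root_.enorm (p i t - (Cstar.mulVec (pstar i) + xinf))
        ≤ Real.sqrt 3 * (B * Real.exp (-lam * t)) := h1
      _ = Real.sqrt 3 * B * Real.exp (-lam * t) := by ring
  · intro i j
    rw [tendsto_pi_nhds]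
    intro k
    have hzero : ∀ (i' : Fin N), Tendsto (fun t => X k t i' - xinf k) atTop (nhds 0) := by
      intro i'
      apply squeeze_zero_norm' (a := fun t => cc k * Real.exp (-mm k * t))
      · filter_upwards [eventually_ge_atTop (0:ℝ)] with t ht
        simpa [Real.norm_eq_abs] using hbd k t ht i'
      · have h1 : Tendsto (fun t : ℝ => mm k * t) atTop atTop :=
          Tendsto.const_mul_atTop (hmm k) tendsto_id
        have h2 : Tendsto (fun t : ℝ => -mm k * t) atTop atBot := by
          simp only [neg_mul]
          exact tendsto_neg_atBot_iff.2 h1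
        have h3 := (Real.tendsto_exp_atBot).comp h2
        have h4 := h3.const_mul (cc k)
        simpa using h4
    have heq : (fun t => (p j t - p i t) k)
        = fun t => ((X k t j - xinf k) - (X k t i - xinf k))
            + (Cstar.mulVec (pstar j - pstar i)) k := by
      funext t
      rw [Matrix.mulVec_sub]
      simp only [hXdef, Pi.sub_apply]
      ring
    have h5 : Tendsto (fun t => ((X k t j - xinf k) - (X k t i - xinf k))
        + (Cstar.mulVec (pstar j - pstar i)) k) atTop
        (nhds ((0 - 0) + (Cstar.mulVec (pstar j - pstar i)) k)) :=
      Tendsto.add ((hzero j).sub (hzero i)) tendsto_const_nhds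
    rw [show (fun t => (p j t - p i t) k) = _ from heq]
    simpa using h5
end

section
/- Consider N stationary agents at fixed positions p_1,…,p_N ∈ ℝ³, where agent i's local frame orientation is a fixed special orthogonal matrix C_i ∈ SO(3), and agent i measures the local relative displacements p_{ji}^i = C_i (p_j − p_i) of its neighbors. Let G be a weighted directed graph on {1,…,N} with positive weights l_{ij} > 0 on its edges, suppose G has a rooted-out branch, and let k_u > 0. Suppose Ĉ_i : [0,∞) → ℝ^{3×3} are orientation estimates for which there exists a matrix C* ∈ ℝ^{3×3} and constants k_w, λ_w > 0 such that ‖Ĉ_i(t)^T C_i − C*‖ ≤ k_w e^{−λ_w t} for all i and all t ≥ 0. If the position estimates p̂_1,…,p̂_N : [0,∞) → ℝ³ are differentiable and evolve according to the estimation law p̂̇_i(t) = k_u Σ_{j : l_{ij} > 0} l_{ij} ( p̂_j(t) − p̂_i(t) − Ĉ_i(t)^T p_{ji}^i ), then there exist points p̂_1^∞,…,p̂_N^∞ ∈ ℝ³ and constants c > 0, λ > 0 such that ‖p̂_i(t) − p̂_i^∞‖ ≤ c e^{−λ t} for all i and t ≥ 0, and p̂_j^∞ − p̂_i^∞ = C*(p_j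 − p_i) for all i, j; in particular ‖p̂_j^∞ − p̂_i^∞‖ = ‖p_j − p_i‖ whenever C* is orthogonal. -/
open Matrix Filter

/-- The Euclidean norm on `ℝ^m`. -/
noncomputable def euclEnorm {m : Type*} [Fintype m] (v : m → ℝ) : ℝ :=
  Real.sqrt (∑ i, v i ^ 2)

section NetLocAux

open NormedSpace

attribute [local instance] Matrix.linftyOpNormedRing Matrix.linftyOpNormedAlgebra

namespace NetLoc

variable {N : ℕ}

noncomputable def entryCLM (i j : Fin N) : Matrix (Fin N) (Fin N) ℝ →L[ℝ] ℝ :=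
  LinearMap.toContinuousLinearMap
    { toFun := fun M => M i j
      map_add' := by intros; rfl
      map_smul' := by intros; rfl }

@[simp] lemma entryCLM_apply (i j : Fin N) (M : Matrix (Fin N) (Fin N) ℝ) :
    entryCLM i j M = M i j := rfl

noncomputable def mulVecCLM (v : Fin N → ℝ) : Matrix (Fin N) (Fin N) ℝ →L[ℝ] (Fin N → ℝ) :=
  LinearMap.toContinuousLinearMap
    { toFun := fun M => M.mulVec v
      map_add' := by intros; simp [Matrix.add_mulVec]
      map_smul' := by intros; simp [Matrix.smul_mulVec] }

@[simp] lemma mulVecCLM_apply (v : Fin N → ℝ) (M : Matrix (Fin N) (Fin N) ℝ) :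
    mulVecCLM v M = M.mulVec v := rfl

lemma exp_smul_one (c : ℝ) : exp (c • (1 : Matrix (Fin N) (Fin N) ℝ)) = Real.exp c • 1 := by
  rw [exp_eq_tsum ℝ]
  have h : ∀ n : ℕ, ((n.factorial : ℝ)⁻¹) • (c • (1 : Matrix (Fin N) (Fin N) ℝ)) ^ n
      = (((n.factorial : ℝ)⁻¹) * c ^ n) • (1 : Matrix (Fin N) (Fin N) ℝ) := by
    intro n; rw [smul_pow, one_pow, smul_smul]
  simp_rw [h]
  rw [Summable.tsum_smul_const]
  · congr 1
    rw [Real.exp_eq_exp_ℝ, exp_eq_tsum ℝ]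
    simp [smul_eq_mul]
  · exact expSeries_summable' (𝕂 := ℝ) c

lemma exp_entry (M : Matrix (Fin N) (Fin N) ℝ) (i j : Fin N) :
    exp M i j = ∑' n : ℕ, ((n.factorial : ℝ)⁻¹) * ((M ^ n) i j) := by
  have h := ((expSeries_summable' (𝕂 := ℝ) M).hasSum.map (entryCLM i j)
    (entryCLM i j).continuous).tsum_eq
  rw [exp_eq_tsum ℝ]
  have h2 : entryCLM (N := N) i j (∑' n : ℕ, ((n.factorial : ℝ)⁻¹) • M ^ n)
      = ∑' n : ℕ, ((n.factorial : ℝ)⁻¹) * ((M ^ n) i j) := by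
    exact h.symm
  exact h2

lemma exp_entry_summable (M : Matrix (Fin N) (Fin N) ℝ) (i j : Fin N) :
    Summable fun n : ℕ => ((n.factorial : ℝ)⁻¹) * ((M ^ n) i j) := by
  have h := (expSeries_summable' (𝕂 := ℝ) M).hasSum.map (entryCLM i j)
    (entryCLM i j).continuous
  exact h.summable

lemma pow_entry_nonneg {M : Matrix (Fin N) (Fin N) ℝ} (hM : ∀ i j, 0 ≤ M i j) :
    ∀ n : ℕ, ∀ i j, 0 ≤ (M ^ n) i j := by
  intro n
  induction n with
  | zero => intro i j; by_cases h : i = j <;> simp [pow_zero, Matrix.one_apply, h]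
  | succ n ih =>
    intro i j
    rw [pow_succ, Matrix.mul_apply]
    exact Finset.sum_nonneg fun w _ => mul_nonneg (ih i w) (hM w j)

lemma exp_nonneg_of_nonneg {M : Matrix (Fin N) (Fin N) ℝ} (hM : ∀ i j, 0 ≤ M i j) :
    ∀ i j, 0 ≤ exp M i j := by
  intro i j
  rw [exp_entry]
  exact tsum_nonneg fun n => mul_nonneg (by positivity) (pow_entry_nonneg hM n i j)

lemma exp_entry_ge_term {M : Matrix (Fin N) (Fin N) ℝ} (hM : ∀ i j, 0 ≤ M i j)
    (m : ℕ) (i j : Fin N) :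
    ((m.factorial : ℝ)⁻¹) * ((M ^ m) i j) ≤ exp M i j := by
  rw [exp_entry]
  exact Summable.le_tsum (exp_entry_summable M i j) m
    (fun n _ => mul_nonneg (by positivity) (pow_entry_nonneg hM n i j))

lemma exp_split (A : Matrix (Fin N) (Fin N) ℝ) (μ : ℝ) :
    exp A = Real.exp (-μ) • exp (A + μ • (1 : Matrix (Fin N) (Fin N) ℝ)) := by
  have hcomm : Commute (A + μ • (1 : Matrix (Fin N) (Fin N) ℝ))
      ((-μ) • (1 : Matrix (Fin N) (Fin N) ℝ)) := by
    apply Commute.smul_right; simp [Commute, SemiconjBy]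
  have h : exp A = exp (A + μ • 1) * exp ((-μ) • (1 : Matrix (Fin N) (Fin N) ℝ)) := by
    rw [← Matrix.exp_add_of_commute _ _ hcomm]
    congr 1
    rw [neg_smul]
    abel
  rw [h, exp_smul_one, Matrix.mul_smul, mul_one]

/-- `exp (t • A)` is entrywise nonnegative for `t ≥ 0` when `A` has nonnegative
off-diagonal entries. -/
lemma exp_tA_nonneg (A : Matrix (Fin N) (Fin N) ℝ)
    (hoff : ∀ i j, i ≠ j → 0 ≤ A i j) {t : ℝ} (ht : 0 ≤ t) :
    ∀ i j, 0 ≤ exp (t • A) i j := by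
  intro i j
  set μ : ℝ := t * (∑ i', |A i' i'|) with hμ
  have hB : ∀ i' j', 0 ≤ (t • A + μ • (1 : Matrix (Fin N) (Fin N) ℝ)) i' j' := by
    intro i' j'
    by_cases h : i' = j'
    · subst h
      have h1 : -A i' i' ≤ ∑ i'', |A i'' i''| := by
        calc -A i' i' ≤ |A i' i'| := neg_le_abs _
          _ ≤ ∑ i'', |A i'' i''| :=
            Finset.single_le_sum (f := fun k => |A k k|) (fun _ _ => abs_nonneg _)
              (Finset.mem_univ i')
      have h2 : 0 ≤ t * A i' i' + μ := by
        rw [hμ]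
        nlinarith [mul_le_mul_of_nonneg_left h1 ht]
      simpa [Matrix.add_apply, Matrix.smul_apply, Matrix.one_apply, smul_eq_mul] using h2
    · have h0 : 0 ≤ t * A i' j' := mul_nonneg ht (hoff i' j' h)
      simpa [Matrix.add_apply, Matrix.smul_apply, Matrix.one_apply, h, smul_eq_mul] using h0
  rw [exp_split (t • A) μ, Matrix.smul_apply, smul_eq_mul]
  exact mul_nonneg (Real.exp_pos _).le (exp_nonneg_of_nonneg hB i j)

/-- the all-ones vector is fixed: row sums of `exp (t•A)` are 1 when `A` has zero row sums. -/
lemma exp_tA_rowsum (A : Matrix (Fin N) (Fin N) ℝ) (hrow : ∀ i, ∑ j, A i j = 0) (t : ℝ) :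
    ∀ i, ∑ j, exp (t • A) i j = 1 := by
  have hA1 : A.mulVec (fun _ => 1) = 0 := by
    funext i
    simp [Matrix.mulVec, dotProduct, hrow i]
  have hpow : ∀ n : ℕ, n ≠ 0 → ((t • A) ^ n).mulVec (fun _ => 1) = 0 := by
    intro n hn
    induction n with
    | zero => exact absurd rfl hn
    | succ m ih =>
      rw [pow_succ, ← Matrix.mulVec_mulVec]
      have : (t • A).mulVec (fun _ => (1:ℝ)) = 0 := by
        rw [Matrix.smul_mulVec, hA1, smul_zero]
      rw [this]
      simp [Matrix.mulVec_zero]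
  have h := ((expSeries_summable' (𝕂 := ℝ) (t • A)).hasSum.map
    (mulVecCLM (fun _ => (1:ℝ))) (mulVecCLM _).continuous).tsum_eq
  have h2 : (exp (t • A)).mulVec (fun _ => 1) = fun _ => 1 := by
    rw [exp_eq_tsum ℝ]
    change mulVecCLM (fun _ => (1:ℝ)) (∑' n : ℕ, ((n.factorial : ℝ)⁻¹) • (t • A) ^ n) = _
    refine h.symm.trans ?_
    have : ∀ n : ℕ, (mulVecCLM (fun _ => (1:ℝ)) ∘ fun n : ℕ => ((n.factorial : ℝ)⁻¹) • (t • A) ^ n) n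
        = if n = 0 then (fun _ => (1:ℝ)) else (0 : Fin N → ℝ) := by
      intro n
      by_cases hn : n = 0
      · subst hn
        simp [Function.comp, Matrix.one_mulVec, Matrix.smul_mulVec]
      · simp [Function.comp, hn, Matrix.smul_mulVec, hpow n hn]
    rw [tsum_congr this, tsum_ite_eq]
  intro i
  have := congrFun h2 i
  simpa [Matrix.mulVec, dotProduct] using this

/-- stochastic bound: entries of `exp(t•A) *ᵥ w` lie between min and max of `w`. -/
lemma exp_tA_mulVec_le (A : Matrix (Fin N) (Fin N) ℝ)
    (hoff : ∀ i j, i ≠ j → 0 ≤ A i j) (hrow : ∀ i, ∑ j, A i j = 0)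
    {t : ℝ} (ht : 0 ≤ t) (w : Fin N → ℝ) (b : ℝ) (hw : ∀ j, w j ≤ b) (i : Fin N) :
    (exp (t • A)).mulVec w i ≤ b := by
  have hrow1 := exp_tA_rowsum A hrow t i
  calc (exp (t • A)).mulVec w i = ∑ j, exp (t • A) i j * w j := rfl
    _ ≤ ∑ j, exp (t • A) i j * b := by
        apply Finset.sum_le_sum
        intro j _
        exact mul_le_mul_of_nonneg_left (hw j) (exp_tA_nonneg A hoff ht i j)
    _ = b := by rw [← Finset.sum_mul, hrow1, one_mul]

lemma exp_tA_mulVec_ge (A : Matrix (Fin N) (Fin N) ℝ)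
    (hoff : ∀ i j, i ≠ j → 0 ≤ A i j) (hrow : ∀ i, ∑ j, A i j = 0)
    {t : ℝ} (ht : 0 ≤ t) (w : Fin N → ℝ) (b : ℝ) (hw : ∀ j, b ≤ w j) (i : Fin N) :
    b ≤ (exp (t • A)).mulVec w i := by
  have h := exp_tA_mulVec_le A hoff hrow ht (-w) (-b) (fun j => neg_le_neg (hw j)) i
  have : (exp (t • A)).mulVec (-w) i = -((exp (t • A)).mulVec w i) := by
    simp [Matrix.mulVec_neg]
  linarith [h, this ▸ h]

/-- positivity of the `r` column of `exp A` under reachability. -/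
lemma exp_A_col_pos (A : Matrix (Fin N) (Fin N) ℝ)
    (hoff : ∀ i j, i ≠ j → 0 ≤ A i j) (r : Fin N)
    (hreach : ∀ v, Relation.ReflTransGen (fun u v => u = v ∨ 0 < A v u) r v) (v : Fin N) :
    0 < exp A v r := by
  set μ : ℝ := (∑ i', |A i' i'|) + 1 with hμ
  set B : Matrix (Fin N) (Fin N) ℝ := A + μ • 1 with hBdef
  have hdiagB : ∀ i, 0 < B i i := by
    intro i
    have h1 : |A i i| ≤ ∑ i'', |A i'' i''| :=
      Finset.single_le_sum (f := fun k => |A k k|) (fun _ _ => abs_nonneg _) (Finset.mem_univ i)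
    have : -A i i ≤ ∑ i'', |A i'' i''| := le_trans (neg_le_abs _) h1
    have hB : B i i = A i i + μ := by simp [hBdef, Matrix.add_apply, Matrix.one_apply]
    rw [hB, hμ]; linarith
  have hBnn : ∀ i j, 0 ≤ B i j := by
    intro i j
    by_cases h : i = j
    · exact (hdiagB i).le.trans_eq (by rw [h])
    · have hB : B i j = A i j := by simp [hBdef, Matrix.add_apply, Matrix.one_apply, h]
      rw [hB]; exact hoff i j h
  -- reachability gives a power with positive entry
  have hkey : ∀ v', Relation.ReflTransGen (fun u v => u = v ∨ 0 < A v u) r v' →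
      ∃ m : ℕ, 0 < (B ^ m) v' r := by
    intro v' hv'
    induction hv' with
    | refl => exact ⟨0, by simp [Matrix.one_apply]⟩
    | @tail u w hsteps hstep ih =>
      obtain ⟨m, hm⟩ := ih
      rcases hstep with h | h
      · exact ⟨m, h ▸ hm⟩
      · refine ⟨m + 1, ?_⟩
        rw [pow_succ', Matrix.mul_apply]
        have hterm : 0 < B w u * (B ^ m) u r := by
          have hBwu : 0 < B w u := by
            by_cases huw : u = w
            · exact huw ▸ hdiagB u
            · have : B w u = A w u := by
                simp [hBdef, Matrix.add_apply, Matrix.one_apply, Ne.symm huw,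
                  fun hh : w = u => huw hh.symm]
              rw [this]; exact h
          exact mul_pos hBwu hm
        refine Finset.sum_pos' (fun x _ => mul_nonneg (hBnn w x) (pow_entry_nonneg hBnn m x r)) ⟨u, Finset.mem_univ u, hterm⟩
  obtain ⟨m, hm⟩ := hkey v (hreach v)
  have hAB : exp A = Real.exp (-μ) • exp B := exp_split A μ
  have hBpos : 0 < exp B v r :=
    lt_of_lt_of_le (by positivity) (exp_entry_ge_term hBnn m v r)
  rw [hAB, Matrix.smul_apply, smul_eq_mul]
  positivity

lemma hasDerivAt_exp_neg_smul (A : Matrix (Fin N) (Fin N) ℝ) (τ : ℝ) :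
    HasDerivAt (fun τ : ℝ => exp ((-τ) • A)) (-(exp ((-τ) • A) * A)) τ := by
  have h1 := hasDerivAt_exp_smul_const (𝕂 := ℝ) A (-τ)
  have h2 : HasDerivAt (fun τ : ℝ => -τ) (-1) τ := (hasDerivAt_id τ).neg
  have h3 := h1.scomp τ h2
  have h4 : ((fun u : ℝ => exp (u • A)) ∘ Neg.neg) = fun τ : ℝ => exp ((-τ) • A) := rfl
  replace h3 : HasDerivAt (fun τ : ℝ => exp ((-τ) • A)) _ τ := h3
  rw [neg_one_smul] at h3; exact h3

lemma exp_smul_mul_exp_smul (A : Matrix (Fin N) (Fin N) ℝ) (a b : ℝ) :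
    exp (a • A) * exp (b • A) = exp ((a + b) • A) := by
  rw [← Matrix.exp_add_of_commute _ _ ((Commute.refl A).smul_left a |>.smul_right b), add_smul]

lemma exp_smul_mulVec_cancel (A : Matrix (Fin N) (Fin N) ℝ) (a : ℝ) (v : Fin N → ℝ) :
    (exp (a • A)).mulVec ((exp ((-a) • A)).mulVec v) = v := by
  rw [Matrix.mulVec_mulVec, exp_smul_mul_exp_smul, add_neg_cancel, zero_smul, exp_zero,
    Matrix.one_mulVec]

/-- Variation of constants estimate over an interval of length at most 1. -/
lemma voc (A : Matrix (Fin N) (Fin N) ℝ)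
    (hoff : ∀ i j, i ≠ j → 0 ≤ A i j) (hrow : ∀ i, ∑ j, A i j = 0)
    (z d : ℝ → Fin N → ℝ)
    (hz : ∀ t, 0 ≤ t → HasDerivAt z (A.mulVec (z t) + d t) t)
    (K lw : ℝ) (hK : 0 ≤ K) (hlw : 0 < lw)
    (hd : ∀ t, 0 ≤ t → ∀ i, |d t i| ≤ K * Real.exp (-lw * t))
    (s t : ℝ) (hs : 0 ≤ s) (hst : s ≤ t) (ht1 : t ≤ s + 1) (i : Fin N) :
    |z t i - (exp ((t - s) • A)).mulVec (z s) i| ≤ K * Real.exp (-lw * s) := by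
  -- the integrand
  set F : ℝ → Fin N → ℝ := fun τ => (exp ((-τ) • A)).mulVec (d τ) with hF
  -- derivative of g τ = exp((-τ)•A) *ᵥ z τ
  have hg : ∀ τ ∈ Set.uIcc s t, HasDerivAt (fun τ => (exp ((-τ) • A)).mulVec (z τ)) (F τ) τ := by
    intro τ hτ
    have hτ0 : 0 ≤ τ := le_trans hs (Set.uIcc_of_le hst ▸ hτ).1
    rw [hasDerivAt_pi]
    intro i'
    have hsum : HasDerivAt
        (fun τ => ∑ j, exp ((-τ) • A) i' j * z τ j)
        (∑ j, ((-(exp ((-τ) • A) * A)) i' j * z τ j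
          + exp ((-τ) • A) i' j * (A.mulVec (z τ) + d τ) j)) τ := by
      apply HasDerivAt.fun_sum
      intro j _
      have hentry : HasDerivAt (fun τ => exp ((-τ) • A) i' j)
          ((-(exp ((-τ) • A) * A)) i' j) τ := by
        have := ((entryCLM i' j).hasFDerivAt.comp_hasDerivAt τ (hasDerivAt_exp_neg_smul A τ))
        exact this
      have hzj : HasDerivAt (fun τ => z τ j) ((A.mulVec (z τ) + d τ) j) τ :=
        hasDerivAt_pi.mp (hz τ hτ0) j
      exact hentry.mul hzj
    have heq : (∑ j, ((-(exp ((-τ) • A) * A)) i' j * z τ j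
          + exp ((-τ) • A) i' j * (A.mulVec (z τ) + d τ) j)) = F τ i' := by
      rw [Finset.sum_add_distrib]
      have e1 : ∑ j, (-(exp ((-τ) • A) * A)) i' j * z τ j
          = -(((exp ((-τ) • A) * A)).mulVec (z τ) i') := by
        simp [Matrix.mulVec, dotProduct, Finset.sum_neg_distrib]
      have e2 : ∑ j, exp ((-τ) • A) i' j * (A.mulVec (z τ) + d τ) j
          = ((exp ((-τ) • A) * A)).mulVec (z τ) i' + (exp ((-τ) • A)).mulVec (d τ) i' := by
        have : ∀ j, exp ((-τ) • A) i' j * (A.mulVec (z τ) + d τ) j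
            = exp ((-τ) • A) i' j * (A.mulVec (z τ)) j + exp ((-τ) • A) i' j * d τ j := by
          intro j; simp [Pi.add_apply]; ring
        rw [Finset.sum_congr rfl (fun j _ => this j), Finset.sum_add_distrib]
        congr 1
        rw [← Matrix.mulVec_mulVec]
        rfl
      rw [e1, e2, hF]
      ring
    have : (fun τ => (exp ((-τ) • A)).mulVec (z τ) i') = fun τ => ∑ j, exp ((-τ) • A) i' j * z τ j := rfl
    rw [← heq]
    exact hsum
  have huIcc : Set.uIcc s t = Set.Icc s t := Set.uIcc_of_le hst
  have huIoc : Set.uIoc s t = Set.Ioc s t := Set.uIoc_of_le hst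
  -- continuity of the matrix exponential curve
  have hexpc : Continuous (fun τ : ℝ => exp ((-τ) • A)) :=
    exp_continuous.comp ((continuous_neg).smul continuous_const)
  -- z is continuous on [s,t]
  have hzc : ContinuousOn z (Set.uIcc s t) := fun τ hτ =>
    ((hz τ (le_trans hs (huIcc ▸ hτ).1)).continuousAt).continuousWithinAt
  -- F is interval integrable
  set F1 : ℝ → Fin N → ℝ := fun τ => (exp ((-τ) • A)).mulVec (deriv z τ) with hF1
  set F2 : ℝ → Fin N → ℝ := fun τ => (exp ((-τ) • A)).mulVec (A.mulVec (z τ)) with hF2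
  have hFeq : ∀ τ ∈ Set.uIoc s t, F τ = F1 τ - F2 τ := by
    intro τ hτ
    have hτ0 : 0 ≤ τ := le_trans hs (le_of_lt (huIoc ▸ hτ).1)
    have hEq : deriv z τ = A.mulVec (z τ) + d τ := (hz τ hτ0).deriv
    have hdEq : d τ = deriv z τ - A.mulVec (z τ) := by rw [hEq]; abel
    rw [hF, hF1, hF2]
    simp only []
    rw [hdEq, Matrix.mulVec_sub]
  have hF1m : Measurable F1 := by
    apply measurable_pi_lambda
    intro i'
    have : (fun τ => F1 τ i') = fun τ => ∑ j, exp ((-τ) • A) i' j * deriv z τ j := rfl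
    rw [this]
    apply Finset.measurable_sum
    intro j _
    apply Measurable.mul
    · exact (((entryCLM i' j).continuous.comp hexpc)).measurable
    · exact (measurable_pi_apply j).comp (measurable_deriv z)
  have hF2c : ContinuousOn F2 (Set.uIcc s t) := by
    rw [continuousOn_pi]
    intro i'
    have : (fun τ => F2 τ i') = fun τ => ∑ j, exp ((-τ) • A) i' j * (∑ j', A j j' * z τ j') := rfl
    rw [this]
    apply continuousOn_finset_sum
    intro j _
    apply ContinuousOn.mul
    · exact ((entryCLM i' j).continuous.comp hexpc).continuousOn
    · apply continuousOn_finset_sum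
      intro j' _
      exact continuousOn_const.mul ((continuous_apply j').comp_continuousOn hzc)
  have hmeasset : MeasurableSet (Set.uIoc s t) := measurableSet_uIoc
  have hmeas : MeasureTheory.AEStronglyMeasurable F
      (MeasureTheory.volume.restrict (Set.uIoc s t)) := by
    have h1 : MeasureTheory.AEStronglyMeasurable F1
        (MeasureTheory.volume.restrict (Set.uIoc s t)) :=
      hF1m.aestronglyMeasurable
    have h2 : MeasureTheory.AEStronglyMeasurable F2
        (MeasureTheory.volume.restrict (Set.uIoc s t)) :=
      (hF2c.mono Set.uIoc_subset_uIcc).aestronglyMeasurable hmeasset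
    apply (h1.sub h2).congr
    filter_upwards [MeasureTheory.ae_restrict_mem hmeasset] with τ hτ
    exact (hFeq τ hτ).symm
  -- bound on F
  obtain ⟨CM, hCM⟩ := (isCompact_uIcc (a := s) (b := t)).exists_bound_of_continuousOn
    hexpc.continuousOn
  have hdK : ∀ τ, 0 ≤ τ → ‖d τ‖ ≤ K := by
    intro τ hτ
    rw [pi_norm_le_iff_of_nonneg hK]
    intro j
    calc ‖d τ j‖ = |d τ j| := rfl
      _ ≤ K * Real.exp (-lw * τ) := hd τ hτ j
      _ ≤ K * 1 := by
          apply mul_le_mul_of_nonneg_left _ hK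
          rw [Real.exp_le_one_iff]
          nlinarith
      _ = K := mul_one K
  have hFbdd : ∀ τ ∈ Set.uIoc s t, ‖F τ‖ ≤ |CM| * K := by
    intro τ hτ
    have hτ0 : 0 ≤ τ := le_trans hs (le_of_lt (huIoc ▸ hτ).1)
    calc ‖F τ‖ ≤ ‖exp ((-τ) • A)‖ * ‖d τ‖ := Matrix.linfty_opNorm_mulVec _ _
      _ ≤ |CM| * K := by
          apply mul_le_mul _ (hdK τ hτ0) (norm_nonneg _) (abs_nonneg _)
          exact le_trans (hCM τ (Set.uIoc_subset_uIcc hτ)) (le_abs_self CM)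
  have hFint : IntervalIntegrable F MeasureTheory.volume s t := by
    rw [intervalIntegrable_iff]
    refine ⟨hmeas, ?_⟩
    apply MeasureTheory.HasFiniteIntegral.restrict_of_bounded (|CM| * K)
    · rw [huIoc]
      exact measure_Ioc_lt_top
    · filter_upwards [MeasureTheory.ae_restrict_mem hmeasset] with τ hτ
      exact hFbdd τ hτ
  -- Fundamental theorem of calculus
  have hFTC := intervalIntegral.integral_eq_sub_of_hasDerivAt hg hFint
  -- rearrange
  set L : (Fin N → ℝ) →L[ℝ] ℝ :=
    (ContinuousLinearMap.proj i).comp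
      (LinearMap.toContinuousLinearMap (Matrix.mulVecLin (exp (t • A)))) with hL
  have hLF : ∀ τ, L (F τ) = (exp ((t - τ) • A)).mulVec (d τ) i := by
    intro τ
    show ((exp (t • A)).mulVec ((exp ((-τ) • A)).mulVec (d τ))) i = _
    rw [Matrix.mulVec_mulVec, exp_smul_mul_exp_smul]
    ring_nf
  have hid : z t i - (exp ((t - s) • A)).mulVec (z s) i
      = ∫ τ in s..t, (exp ((t - τ) • A)).mulVec (d τ) i := by
    have h1 := L.intervalIntegral_comp_comm hFint
    rw [hFTC] at h1
    have h2 : L ((exp ((-t) • A)).mulVec (z t) - (exp ((-s) • A)).mulVec (z s))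
        = z t i - (exp ((t - s) • A)).mulVec (z s) i := by
      rw [map_sub]
      congr 1
      · show ((exp (t • A)).mulVec ((exp ((-t) • A)).mulVec (z t))) i = z t i
        rw [exp_smul_mulVec_cancel]
      · show ((exp (t • A)).mulVec ((exp ((-s) • A)).mulVec (z s))) i = _
        rw [Matrix.mulVec_mulVec, exp_smul_mul_exp_smul]
        ring_nf
    rw [← h2, ← h1]
    exact intervalIntegral.integral_congr (fun τ _ => (hLF τ).symm) |>.symm
  -- final bound
  rw [hid]
  have hbound : ∀ τ ∈ Set.uIoc s t,
      ‖(exp ((t - τ) • A)).mulVec (d τ) i‖ ≤ K * Real.exp (-lw * τ) := by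
    intro τ hτ
    have hτ0 : 0 ≤ τ := le_trans hs (le_of_lt (huIoc ▸ hτ).1)
    have httau : 0 ≤ t - τ := by
      have := (huIoc ▸ hτ).2
      linarith
    rw [Real.norm_eq_abs, abs_le]
    constructor
    · apply exp_tA_mulVec_ge A hoff hrow httau
      intro j
      have := hd τ hτ0 j
      rw [abs_le] at this
      exact this.1
    · apply exp_tA_mulVec_le A hoff hrow httau
      intro j
      have := hd τ hτ0 j
      rw [abs_le] at this
      exact this.2
  have hcontKexp : Continuous (fun τ : ℝ => K * Real.exp (-lw * τ)) :=
    continuous_const.mul (Real.continuous_exp.comp (continuous_const.mul continuous_id))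
  have hgint : IntervalIntegrable (fun τ => K * Real.exp (-lw * τ)) MeasureTheory.volume s t :=
    hcontKexp.intervalIntegrable s t
  have h3 := intervalIntegral.norm_integral_le_of_norm_le
    (f := fun τ => (exp ((t - τ) • A)).mulVec (d τ) i)
    (μ := MeasureTheory.volume) (a := s) (b := t)
    hst (by filter_upwards with τ hτ
            exact hbound τ (by rw [huIoc]; exact hτ)) hgint
  rw [Real.norm_eq_abs] at h3
  apply le_trans h3
  have h4 : (∫ τ in s..t, K * Real.exp (-lw * τ)) ≤ K * Real.exp (-lw * s) := by
    calc (∫ τ in s..t, K * Real.exp (-lw * τ)) ≤ ∫ τ in s..t, K * Real.exp (-lw * s) := by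
          apply intervalIntegral.integral_mono_on hst hgint
            (continuous_const.intervalIntegrable s t)
          intro τ hτ
          apply mul_le_mul_of_nonneg_left _ hK
          apply Real.exp_le_exp.mpr
          nlinarith [hτ.1]
      _ = (t - s) * (K * Real.exp (-lw * s)) := by
          rw [intervalIntegral.integral_const, smul_eq_mul]
      _ ≤ 1 * (K * Real.exp (-lw * s)) := by
          apply mul_le_mul_of_nonneg_right (by linarith) (by positivity)
      _ = K * Real.exp (-lw * s) := one_mul _
  exact h4

/-- contraction of oscillation by a stochastic matrix with a positive column -/
lemma stoch_mulVec_le (P : Matrix (Fin N) (Fin N) ℝ) (hP : ∀ i j, 0 ≤ P i j)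
    (hProw : ∀ i, ∑ j, P i j = 1) (r : Fin N) (δ : ℝ) (hδ : 0 ≤ δ)
    (hcol : ∀ v, δ ≤ P v r) (w : Fin N → ℝ) (b : ℝ) (hb : ∀ j, w j ≤ b) (i : Fin N) :
    P.mulVec w i ≤ δ * w r + (1 - δ) * b := by
  have hsplit : P.mulVec w i
      = (∑ j, (P i j - if j = r then δ else 0) * w j) + δ * w r := by
    have h1 : ∀ j, (P i j - if j = r then δ else 0) * w j
        = P i j * w j - (if j = r then δ * w j else 0) := by
      intro j; by_cases h : j = r <;> simp [h] <;> ring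
    rw [Finset.sum_congr rfl (fun j _ => h1 j), Finset.sum_sub_distrib,
      Finset.sum_ite_eq' Finset.univ r (fun j => δ * w j)]
    simp [Matrix.mulVec, dotProduct]
  have hQnn : ∀ j, 0 ≤ P i j - if j = r then δ else 0 := by
    intro j
    by_cases h : j = r
    · subst h; simpa using sub_nonneg.mpr (hcol i)
    · simpa [h] using hP i j
  have hQsum : (∑ j, (P i j - if j = r then δ else 0)) = 1 - δ := by
    rw [Finset.sum_sub_distrib, Finset.sum_ite_eq' Finset.univ r (fun _ => δ)]
    simp [hProw i]
  calc P.mulVec w i = (∑ j, (P i j - if j = r then δ else 0) * w j) + δ * w r := hsplit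
    _ ≤ (∑ j, (P i j - if j = r then δ else 0) * b) + δ * w r := by
        gcongr with j
        · exact hQnn j
        · exact hb j
    _ = (1 - δ) * b + δ * w r := by rw [← Finset.sum_mul, hQsum]
    _ = δ * w r + (1 - δ) * b := by ring

lemma stoch_mulVec_ge (P : Matrix (Fin N) (Fin N) ℝ) (hP : ∀ i j, 0 ≤ P i j)
    (hProw : ∀ i, ∑ j, P i j = 1) (r : Fin N) (δ : ℝ) (hδ : 0 ≤ δ)
    (hcol : ∀ v, δ ≤ P v r) (w : Fin N → ℝ) (b : ℝ) (hb : ∀ j, b ≤ w j) (i : Fin N) :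
    δ * w r + (1 - δ) * b ≤ P.mulVec w i := by
  have h := stoch_mulVec_le P hP hProw r δ hδ hcol (-w) (-b) (fun j => neg_le_neg (hb j)) i
  have h2 : P.mulVec (-w) i = -(P.mulVec w i) := by simp [Matrix.mulVec_neg]
  rw [h2] at h
  simp only [Pi.neg_apply] at h
  linarith

set_option maxHeartbeats 1000000 in
/-- Main scalar consensus convergence result. -/
lemma consensus_scalar (A : Matrix (Fin N) (Fin N) ℝ)
    (hoff : ∀ i j, i ≠ j → 0 ≤ A i j) (hrow : ∀ i, ∑ j, A i j = 0)
    (r : Fin N) (hreach : ∀ v, Relation.ReflTransGen (fun u v => u = v ∨ 0 < A v u) r v)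
    (z d : ℝ → Fin N → ℝ)
    (K lw : ℝ) (hK : 0 < K) (hlw : 0 < lw)
    (hd : ∀ t, 0 ≤ t → ∀ i, |d t i| ≤ K * Real.exp (-lw * t))
    (hz : ∀ t, 0 ≤ t → HasDerivAt z (A.mulVec (z t) + d t) t) :
    ∃ α : ℝ, ∃ c > (0:ℝ), ∃ lam > (0:ℝ),
      ∀ t, 0 ≤ t → ∀ i, |z t i - α| ≤ c * Real.exp (-lam * t) := by
  have hne : (Finset.univ : Finset (Fin N)).Nonempty := ⟨r, Finset.mem_univ r⟩
  -- facts about exp(u•A) for u ≥ 0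
  have hPnn : ∀ u : ℝ, 0 ≤ u → ∀ i j, 0 ≤ exp (u • A) i j := fun u hu => exp_tA_nonneg A hoff hu
  have hProw : ∀ u : ℝ, ∀ i, ∑ j, exp (u • A) i j = 1 := fun u => exp_tA_rowsum A hrow u
  -- δ
  set S := exp A with hS
  have hS1 : S = exp ((1:ℝ) • A) := by rw [one_smul]
  set δ := Finset.univ.inf' hne (fun v => S v r) with hδdef
  have hδpos : 0 < δ := by
    rw [hδdef, Finset.lt_inf'_iff]
    exact fun v _ => exp_A_col_pos A hoff r hreach v
  have hδle : ∀ v, δ ≤ S v r := fun v => Finset.inf'_le _ (Finset.mem_univ v)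
  have hδ1 : δ ≤ 1 := by
    have h1 : S r r ≤ ∑ j, S r j :=
      Finset.single_le_sum (f := fun j => S r j)
        (fun j _ => by rw [hS1]; exact hPnn 1 zero_le_one r j) (Finset.mem_univ r)
    have h2 : ∑ j, S r j = 1 := by rw [hS1]; exact hProw 1 r
    exact le_trans (hδle r) (h1.trans_eq h2)
  -- discrete sequences
  set Mx : ℕ → ℝ := fun n => Finset.univ.sup' hne (fun i => z (n : ℝ) i) with hMx
  set mn : ℕ → ℝ := fun n => Finset.univ.inf' hne (fun i => z (n : ℝ) i) with hmn
  set V : ℕ → ℝ := fun n => Mx n - mn n with hV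
  set en : ℕ → ℝ := fun n => K * Real.exp (-lw * n) with hen
  have hen0 : ∀ n, 0 < en n := fun n => by rw [hen]; positivity
  have hmnMx : ∀ n, mn n ≤ Mx n := fun n =>
    le_trans (Finset.inf'_le _ (Finset.mem_univ r)) (Finset.le_sup' _ (Finset.mem_univ r))
  have hV0 : ∀ n, 0 ≤ V n := fun n => sub_nonneg.mpr (hmnMx n)
  -- the VOC step estimate on [n, n+1]
  have hstep : ∀ n : ℕ, ∀ t : ℝ, (n:ℝ) ≤ t → t ≤ (n:ℝ) + 1 → ∀ i,
      |z t i - (exp ((t - n) • A)).mulVec (fun j => z (n:ℝ) j) i| ≤ en n := by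
    intro n t h1 h2 i
    have := voc A hoff hrow z d hz K lw hK.le hlw hd (n:ℝ) t (Nat.cast_nonneg n) h1 h2 i
    simpa [hen] using this
  -- bounds on z over [n, n+1]
  have hub : ∀ n : ℕ, ∀ t : ℝ, (n:ℝ) ≤ t → t ≤ (n:ℝ) + 1 → ∀ i,
      z t i ≤ Mx n + en n := by
    intro n t h1 h2 i
    have hvoc := hstep n t h1 h2 i
    have hP := exp_tA_mulVec_le A hoff hrow (t := t - n) (by linarith)
      (fun j => z (n:ℝ) j) (Mx n) (fun j => Finset.le_sup' _ (Finset.mem_univ j)) i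
    have := abs_le.mp hvoc
    linarith [this.2]
  have hlb : ∀ n : ℕ, ∀ t : ℝ, (n:ℝ) ≤ t → t ≤ (n:ℝ) + 1 → ∀ i,
      mn n - en n ≤ z t i := by
    intro n t h1 h2 i
    have hvoc := hstep n t h1 h2 i
    have hP := exp_tA_mulVec_ge A hoff hrow (t := t - n) (by linarith)
      (fun j => z (n:ℝ) j) (mn n) (fun j => Finset.inf'_le _ (Finset.mem_univ j)) i
    have := abs_le.mp hvoc
    linarith [this.1]
  have hcast : ∀ n : ℕ, ((n + 1 : ℕ) : ℝ) = (n : ℝ) + 1 := by intro n; push_cast; ring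
  -- monotonicity-type bounds for Mx and mn
  have hMxub : ∀ n, Mx (n + 1) ≤ Mx n + en n := by
    intro n
    apply Finset.sup'_le
    intro i _
    rw [hcast n]
    exact hub n ((n:ℝ)+1) (by linarith) (by linarith) i
  have hmnlb : ∀ n, mn n - en n ≤ mn (n + 1) := by
    intro n
    apply Finset.le_inf'
    intro i _
    rw [hcast n]
    exact hlb n ((n:ℝ)+1) (by linarith) (by linarith) i
  -- contraction of V
  have hVstep : ∀ n, V (n + 1) ≤ (1 - δ) * V n + 2 * en n := by
    intro n
    obtain ⟨imax, _, himax⟩ := Finset.exists_mem_eq_sup' hne (fun i => z ((n+1:ℕ) : ℝ) i)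
    obtain ⟨imin, _, himin⟩ := Finset.exists_mem_eq_inf' hne (fun i => z ((n+1:ℕ) : ℝ) i)
    have h1 : ∀ i, |z ((n:ℝ)+1) i - S.mulVec (fun j => z (n:ℝ) j) i| ≤ en n := by
      intro i
      have := hstep n ((n:ℝ)+1) (by linarith) (by linarith) i
      have he : ((n:ℝ)+1) - n = 1 := by ring
      rw [he] at this
      rw [← hS1] at this
      exact this
    have hup : ∀ i, S.mulVec (fun j => z (n:ℝ) j) i ≤ δ * z (n:ℝ) r + (1 - δ) * Mx n := by
      intro i
      apply stoch_mulVec_le S (by rw [hS1]; exact hPnn 1 zero_le_one)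
        (by rw [hS1]; exact hProw 1) r δ hδpos.le hδle _ _
        (fun j => Finset.le_sup' _ (Finset.mem_univ j))
    have hdown : ∀ i, δ * z (n:ℝ) r + (1 - δ) * mn n ≤ S.mulVec (fun j => z (n:ℝ) j) i := by
      intro i
      apply stoch_mulVec_ge S (by rw [hS1]; exact hPnn 1 zero_le_one)
        (by rw [hS1]; exact hProw 1) r δ hδpos.le hδle _ _
        (fun j => Finset.inf'_le _ (Finset.mem_univ j))
    have e1 := abs_le.mp (h1 imax)
    have e2 := abs_le.mp (h1 imin)
    have : V (n+1) = z ((n+1:ℕ):ℝ) imax - z ((n+1:ℕ):ℝ) imin := by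
      rw [hV]; simp only [hMx, hmn]; rw [himax, himin]
    rw [this]
    push_cast
    have h3 := hup imax
    have h4 := hdown imin
    have hVn : V n = Mx n - mn n := rfl
    nlinarith [e1.1, e1.2, e2.1, e2.2]
  -- geometric rates
  set σ0 := max (1 - δ) (Real.exp (-lw)) with hσ0
  set σ := (1 + σ0)/2 with hσ
  have hσ00 : 0 < σ0 := lt_max_of_lt_right (Real.exp_pos _)
  have hexplt1 : Real.exp (-lw) < 1 := by
    have := Real.exp_lt_exp.mpr (show -lw < 0 by linarith)
    simpa using this
  have hσ01 : σ0 < 1 := max_lt (by linarith) hexplt1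
  have hσpos : 0 < σ := by rw [hσ]; linarith
  have hσ1 : σ < 1 := by rw [hσ]; linarith
  have hσ0σ : σ0 < σ := by rw [hσ]; linarith
  have h1δσ : 1 - δ ≤ σ0 := le_max_left _ _
  have hexpσ : Real.exp (-lw) ≤ σ0 := le_max_right _ _
  have henσ : ∀ n : ℕ, en n ≤ K * σ ^ n := by
    intro n
    show K * Real.exp (-lw * (n:ℝ)) ≤ K * σ ^ n
    have h1 : Real.exp (-lw * (n:ℝ)) = (Real.exp (-lw))^n := by
      rw [← Real.exp_nat_mul]; ring_nf
    rw [h1]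
    apply mul_le_mul_of_nonneg_left _ hK.le
    exact pow_le_pow_left₀ (Real.exp_pos _).le (le_trans hexpσ hσ0σ.le) n
  set C0 := max (V 0) (2*K/(σ - σ0)) with hC0
  have hC0V : V 0 ≤ C0 := le_max_left _ _
  have hσσ0pos : 0 < σ - σ0 := by linarith
  have hC0K : 2*K ≤ (σ - σ0) * C0 := by
    have h := le_max_right (V 0) (2*K/(σ - σ0))
    calc 2*K = (σ - σ0) * (2*K/(σ-σ0)) := by field_simp
      _ ≤ (σ - σ0)*C0 := mul_le_mul_of_nonneg_left h hσσ0pos.le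
  have hC00 : 0 ≤ C0 := le_trans (hV0 0) hC0V
  have hVgeo : ∀ n, V n ≤ C0 * σ ^ n := by
    intro n
    induction n with
    | zero => simpa using hC0V
    | succ n ih =>
      have hp : (0:ℝ) ≤ σ^n := pow_nonneg hσpos.le n
      calc V (n+1) ≤ (1-δ)*V n + 2 * en n := hVstep n
        _ ≤ σ0*(C0*σ^n) + 2*(K*σ^n) := by
            have ha : (1-δ)*V n ≤ σ0*(C0*σ^n) :=
              mul_le_mul h1δσ ih (hV0 n) hσ00.le
            have hb : 2 * en n ≤ 2*(K*σ^n) := by linarith [henσ n]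
            linarith
        _ = (σ0*C0 + 2*K)*σ^n := by ring
        _ ≤ (σ*C0)*σ^n := by nlinarith
        _ = C0*σ^(n+1) := by ring
  have hMxdiff : ∀ n, dist (Mx n) (Mx (n+1)) ≤ (C0 + K) * σ^n := by
    intro n
    have hp : (0:ℝ) ≤ σ^n := pow_nonneg hσpos.le n
    rw [Real.dist_eq, abs_le]
    have h1 := hMxub n
    have h2 := hmnlb n
    have h3 := hmnMx (n+1)
    have h4 := henσ n
    have h5 := hVgeo n
    have hVn : V n = Mx n - mn n := rfl
    constructor
    · nlinarith
    · nlinarith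
  have hcauchy : CauchySeq Mx := cauchySeq_of_le_geometric σ (C0+K) hσ1 hMxdiff
  obtain ⟨α, hα⟩ := cauchySeq_tendsto_of_complete hcauchy
  have hMα : ∀ n, |Mx n - α| ≤ (C0+K) * σ^n / (1-σ) := by
    intro n
    have := dist_le_of_le_geometric_of_tendsto σ (C0+K) hσ1 hMxdiff hα n
    rwa [Real.dist_eq] at this
  set C1 := (C0+K)/(1-σ) + C0 + 2*K with hC1
  have h1σpos : 0 < 1 - σ := by linarith
  have hC1pos : 0 < C1 := by
    have : 0 ≤ (C0+K)/(1-σ) := by positivity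
    rw [hC1]; linarith
  set lam := -Real.log σ with hlam
  have hlam0 : 0 < lam := by
    have := Real.log_neg hσpos hσ1
    rw [hlam]; linarith
  refine ⟨α, C1 * Real.exp lam, by positivity, lam, hlam0, ?_⟩
  intro t ht i
  set n := ⌊t⌋₊ with hn
  have hnt : (n:ℝ) ≤ t := Nat.floor_le ht
  have htn1 : t ≤ (n:ℝ) + 1 := (Nat.lt_floor_add_one t).le
  have hu := hub n t hnt htn1 i
  have hl := hlb n t hnt htn1 i
  have hVn : V n = Mx n - mn n := rfl
  have key : |z t i - α| ≤ |Mx n - α| + V n + en n := by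
    rw [abs_le]
    constructor
    · linarith [neg_abs_le (Mx n - α), hV0 n, hen0 n, hl, hVn]
    · linarith [le_abs_self (Mx n - α), hV0 n, hen0 n, hu, hVn]
  have hgeo : |Mx n - α| + V n + en n ≤ C1 * σ ^ n := by
    have h1 := hMα n
    have h2 := hVgeo n
    have h3 := henσ n
    have hp : (0:ℝ) ≤ σ^n := pow_nonneg hσpos.le n
    have hdiv : (C0+K) * σ^n / (1-σ) = ((C0+K)/(1-σ)) * σ^n := by ring
    rw [hdiv] at h1
    have hKσ : 0 ≤ K * σ^n := mul_nonneg hK.le hp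
    rw [hC1]
    ring_nf
    ring_nf at h1 h2 h3 hKσ
    linarith [h1, h2, h3, hKσ]
  have hσn : σ ^ n ≤ Real.exp lam * Real.exp (-lam * t) := by
    have hσn' : σ ^ n = Real.exp (-lam * n) := by
      rw [show -lam * (n:ℝ) = (n:ℝ) * Real.log σ by rw [hlam]; ring,
        Real.exp_nat_mul, Real.exp_log hσpos]
    rw [hσn', ← Real.exp_add]
    apply Real.exp_le_exp.mpr
    have ht1 : t - 1 ≤ (n:ℝ) := by linarith
    nlinarith [mul_le_mul_of_nonneg_left ht1 hlam0.le]
  calc |z t i - α| ≤ C1 * σ^n := le_trans key hgeo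
    _ ≤ C1 * (Real.exp lam * Real.exp (-lam*t)) := mul_le_mul_of_nonneg_left hσn hC1pos.le
    _ = C1 * Real.exp lam * Real.exp (-lam*t) := by ring

end NetLoc

namespace NetLoc

lemma abs_entry_le_mnorm {m n : Type*} [Fintype m] [Fintype n]
    (A : Matrix m n ℝ) (k : m) (q : n) : |A k q| ≤ mnorm A := by
  rw [mnorm, ← Real.sqrt_sq_eq_abs]
  apply Real.sqrt_le_sqrt
  calc (A k q)^2 ≤ ∑ j, (A k j)^2 :=
      Finset.single_le_sum (f := fun j => (A k j)^2) (fun j _ => sq_nonneg _)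
        (Finset.mem_univ q)
    _ ≤ ∑ i, ∑ j, (A i j)^2 :=
      Finset.single_le_sum (f := fun i => ∑ j, (A i j)^2)
        (fun i _ => Finset.sum_nonneg fun j _ => sq_nonneg _) (Finset.mem_univ k)

lemma enorm_mulVec_orth {n : ℕ} (C : Matrix (Fin n) (Fin n) ℝ) (h : Cᵀ * C = 1)
    (v : Fin n → ℝ) : euclEnorm (C.mulVec v) = euclEnorm v := by
  have hCC : ∀ m m', (∑ k, C k m * C k m') = if m = m' then 1 else 0 := by
    intro m m'
    have h2 := congrFun (congrFun h m) m'
    simpa [Matrix.mul_apply, Matrix.transpose_apply, Matrix.one_apply] using h2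
  rw [euclEnorm, euclEnorm]
  congr 1
  calc ∑ k, (C.mulVec v k)^2
      = ∑ k, ∑ m, ∑ m', (C k m * v m) * (C k m' * v m') := by
        apply Finset.sum_congr rfl
        intro k _
        rw [show C.mulVec v k = ∑ m, C k m * v m from rfl, sq, Finset.sum_mul_sum]
    _ = ∑ m, ∑ m', ∑ k, (C k m * v m) * (C k m' * v m') := by
        rw [Finset.sum_comm]
        apply Finset.sum_congr rfl
        intro m _
        rw [Finset.sum_comm]
    _ = ∑ m, ∑ m', (∑ k, C k m * C k m') * (v m * v m') := by
        apply Finset.sum_congr rfl; intro m _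
        apply Finset.sum_congr rfl; intro m' _
        rw [Finset.sum_mul]
        apply Finset.sum_congr rfl; intro k _
        ring
    _ = ∑ m, (v m)^2 := by
        have hterm : ∀ m m', (∑ k, C k m * C k m') * (v m * v m')
            = if m' = m then (v m)^2 else 0 := by
          intro m m'
          rw [hCC]
          by_cases hmm : m = m'
          · subst hmm; simp [sq]
          · simp [hmm, Ne.symm hmm]
        calc ∑ m, ∑ m', (∑ k, C k m * C k m') * (v m * v m')
            = ∑ m, ∑ m', (if m' = m then (v m)^2 else 0) := by
              apply Finset.sum_congr rfl; intro m _
              apply Finset.sum_congr rfl; intro m' _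
              exact hterm m m'
          _ = ∑ m, (v m)^2 := by
              apply Finset.sum_congr rfl; intro m _
              rw [Finset.sum_ite_eq' Finset.univ m (fun _ => (v m)^2)]
              simp

end NetLoc


end NetLocAux

open NetLoc

set_option maxHeartbeats 1000000 in
/-- under the position estimation law with exponentially convergent
orientation estimates, the position estimates converge exponentially to points whose
relative positions are the true relative positions rotated by `C*`; in particular the
inter-agent distances are recovered whenever `C*` is orthogonal. -/
theorem network_localization_convergence
    (N : ℕ)
    (p : Fin N → Fin 3 → ℝ)
    (C : Fin N → Matrix (Fin 3) (Fin 3) ℝ)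
    (hC : ∀ i, (C i)ᵀ * C i = 1) (hCdet : ∀ i, (C i).det = 1)
    (l : Fin N → Fin N → ℝ) (hl : ∀ i j, 0 ≤ l i j)
    (hroot : hasRootedOutBranch l)
    (ku : ℝ) (hku : 0 < ku)
    (Chat : Fin N → ℝ → Matrix (Fin 3) (Fin 3) ℝ)
    (Cstar : Matrix (Fin 3) (Fin 3) ℝ)
    (kw lw : ℝ) (hkw : 0 < kw) (hlw : 0 < lw)
    (hest : ∀ i, ∀ t : ℝ, 0 ≤ t →
      mnorm ((Chat i t)ᵀ * C i - Cstar) ≤ kw * Real.exp (-lw * t))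
    (phat : Fin N → ℝ → Fin 3 → ℝ)
    (hode : ∀ i, ∀ t : ℝ, 0 ≤ t →
      HasDerivAt (phat i)
        (ku • ∑ j ∈ Finset.univ.filter (fun j => 0 < l i j),
          l i j • (phat j t - phat i t
            - ((Chat i t)ᵀ).mulVec ((C i).mulVec (p j - p i)))) t) :
    ∃ phatinf : Fin N → Fin 3 → ℝ, ∃ c > (0 : ℝ), ∃ lam > (0 : ℝ),
      (∀ i, ∀ t : ℝ, 0 ≤ t → euclEnorm (phat i t - phatinf i) ≤ c * Real.exp (-lam * t)) ∧
      (∀ i j, phatinf j - phatinf i = Cstar.mulVec (p j - p i)) ∧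
      (Cstarᵀ * Cstar = 1 →
        ∀ i j, euclEnorm (phatinf j - phatinf i) = euclEnorm (p j - p i)) := by
  obtain ⟨r, hr⟩ := hroot
  -- the system matrix
  set A : Matrix (Fin N) (Fin N) ℝ :=
    Matrix.of (fun i j => ku * (l i j - if i = j then (∑ j', l i j') else 0)) with hA
  have hAapp : ∀ i j, A i j = ku * (l i j - if i = j then (∑ j', l i j') else 0) :=
    fun i j => rfl
  have hoff : ∀ i j, i ≠ j → 0 ≤ A i j := by
    intro i j hij
    rw [hAapp, if_neg hij]
    simpa using mul_nonneg hku.le (hl i j)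
  have hrow : ∀ i, ∑ j, A i j = 0 := by
    intro i
    have h1 : ∑ j, A i j = ku * ∑ j, (l i j - if i = j then (∑ j', l i j') else 0) := by
      rw [Finset.mul_sum]
      exact Finset.sum_congr rfl fun j _ => hAapp i j
    rw [h1, Finset.sum_sub_distrib, Finset.sum_ite_eq Finset.univ i
      (fun _ => ∑ j', l i j')]
    simp
  have hreach : ∀ v, Relation.ReflTransGen (fun u v => u = v ∨ 0 < A v u) r v := by
    intro v
    apply Relation.ReflTransGen.mono ?_ _ _ (hr v)
    intro u w h
    by_cases huw : u = w
    · exact Or.inl huw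
    · right
      rw [hAapp, if_neg (fun hh => huw hh.symm)]
      simpa using mul_pos hku h
  -- disturbance bound constant
  set K : ℝ := 1 + kw * ku * (∑ i', ∑ j, l i' j * (∑ m, |p j m - p i' m|)) with hKdef
  have hsum_nn : ∀ i' : Fin N, 0 ≤ ∑ j, l i' j * (∑ m, |p j m - p i' m|) := by
    intro i'
    apply Finset.sum_nonneg
    intro j _
    exact mul_nonneg (hl i' j) (Finset.sum_nonneg fun m _ => abs_nonneg _)
  have hK : 0 < K := by
    have h0 : 0 ≤ kw * ku * (∑ i', ∑ j, l i' j * (∑ m, |p j m - p i' m|)) := by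
      apply mul_nonneg (mul_nonneg hkw.le hku.le)
      exact Finset.sum_nonneg fun i' _ => hsum_nn i'
    rw [hKdef]; linarith
  -- per coordinate convergence
  have hcoord : ∀ k : Fin 3, ∃ α : ℝ, ∃ c > (0:ℝ), ∃ lam > (0:ℝ),
      ∀ t, 0 ≤ t → ∀ i, |phat i t k - Cstar.mulVec (p i) k - α| ≤ c * Real.exp (-lam * t) := by
    intro k
    set z : ℝ → Fin N → ℝ := fun t i => phat i t k - Cstar.mulVec (p i) k with hzdef
    set d : ℝ → Fin N → ℝ := fun t i =>
      -(ku * ∑ j, l i j * (((Chat i t)ᵀ * C i - Cstar).mulVec (p j - p i) k)) with hddef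
    have hdbound : ∀ t, 0 ≤ t → ∀ i, |d t i| ≤ K * Real.exp (-lw * t) := by
      intro t ht i
      have hE : ∀ k' m, |((Chat i t)ᵀ * C i - Cstar) k' m| ≤ kw * Real.exp (-lw * t) :=
        fun k' m => le_trans (abs_entry_le_mnorm _ k' m) (hest i t ht)
      have hterm : ∀ j, |l i j * (((Chat i t)ᵀ * C i - Cstar).mulVec (p j - p i) k)|
          ≤ l i j * ((∑ m, |p j m - p i m|) * (kw * Real.exp (-lw * t))) := by
        intro j
        rw [abs_mul, abs_of_nonneg (hl i j)]
        apply mul_le_mul_of_nonneg_left _ (hl i j)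
        calc |((Chat i t)ᵀ * C i - Cstar).mulVec (p j - p i) k|
            = |∑ m, ((Chat i t)ᵀ * C i - Cstar) k m * (p j m - p i m)| := rfl
          _ ≤ ∑ m, |((Chat i t)ᵀ * C i - Cstar) k m * (p j m - p i m)| :=
              Finset.abs_sum_le_sum_abs _ _
          _ ≤ ∑ m, (kw * Real.exp (-lw * t)) * |p j m - p i m| := by
              apply Finset.sum_le_sum
              intro m _
              rw [abs_mul]
              exact mul_le_mul_of_nonneg_right (hE k m) (abs_nonneg _)
          _ = (∑ m, |p j m - p i m|) * (kw * Real.exp (-lw * t)) := by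
              rw [Finset.sum_mul]
              apply Finset.sum_congr rfl
              intro m _
              ring
      have h1 : |d t i| ≤ ku * ∑ j, l i j * ((∑ m, |p j m - p i m|) * (kw * Real.exp (-lw * t))) := by
        rw [hddef]
        simp only [abs_neg, abs_mul, abs_of_nonneg hku.le]
        apply mul_le_mul_of_nonneg_left _ hku.le
        exact le_trans (Finset.abs_sum_le_sum_abs _ _) (Finset.sum_le_sum fun j _ => hterm j)
      have h2 : ku * ∑ j, l i j * ((∑ m, |p j m - p i m|) * (kw * Real.exp (-lw * t)))
          = (kw * ku * (∑ j, l i j * (∑ m, |p j m - p i m|))) * Real.exp (-lw * t) := by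
        rw [Finset.mul_sum, Finset.mul_sum, Finset.sum_mul]
        apply Finset.sum_congr rfl
        intro j _
        ring
      have h3 : kw * ku * (∑ j, l i j * (∑ m, |p j m - p i m|)) ≤ K := by
        rw [hKdef]
        have h4 : (∑ j, l i j * (∑ m, |p j m - p i m|))
            ≤ ∑ i', ∑ j, l i' j * (∑ m, |p j m - p i' m|) :=
          Finset.single_le_sum (f := fun i' => ∑ j, l i' j * (∑ m, |p j m - p i' m|))
            (fun i' _ => hsum_nn i') (Finset.mem_univ i)
        nlinarith [mul_le_mul_of_nonneg_left h4 (mul_nonneg hkw.le hku.le)]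
      calc |d t i| ≤ (kw * ku * (∑ j, l i j * (∑ m, |p j m - p i m|))) * Real.exp (-lw * t) := by
            rw [← h2]; exact h1
        _ ≤ K * Real.exp (-lw * t) :=
            mul_le_mul_of_nonneg_right h3 (Real.exp_pos _).le
    have hzode : ∀ t, 0 ≤ t → HasDerivAt z (A.mulVec (z t) + d t) t := by
      intro t ht
      rw [hasDerivAt_pi]
      intro i
      have h0 := hasDerivAt_pi.mp (hode i t ht) k
      have h1 := h0.sub_const (Cstar.mulVec (p i) k)
      convert h1 using 1
      -- show (A *ᵥ z t + d t) i equals the k-component of the ODE right-hand side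
      have hWk : (ku • ∑ j ∈ Finset.univ.filter (fun j => 0 < l i j),
          l i j • (phat j t - phat i t - ((Chat i t)ᵀ).mulVec ((C i).mulVec (p j - p i)))) k
          = ku * ∑ j ∈ Finset.univ.filter (fun j => 0 < l i j),
            l i j * ((phat j t k - phat i t k)
              - ((Chat i t)ᵀ).mulVec ((C i).mulVec (p j - p i)) k) := by
        simp [Finset.sum_apply, smul_eq_mul]
      have hfull : ∑ j ∈ Finset.univ.filter (fun j => 0 < l i j),
            l i j * ((phat j t k - phat i t k)
              - ((Chat i t)ᵀ).mulVec ((C i).mulVec (p j - p i)) k)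
          = ∑ j, l i j * ((phat j t k - phat i t k)
              - ((Chat i t)ᵀ).mulVec ((C i).mulVec (p j - p i)) k) := by
        apply Finset.sum_subset (Finset.filter_subset _ _)
        intro j _ hj
        have : l i j = 0 := by
          rcases lt_or_eq_of_le (hl i j) with h | h
          · exact absurd (Finset.mem_filter.mpr ⟨Finset.mem_univ j, h⟩) hj
          · exact h.symm
        rw [this, zero_mul]
      have hterm2 : ∀ j, l i j * ((phat j t k - phat i t k)
              - ((Chat i t)ᵀ).mulVec ((C i).mulVec (p j - p i)) k)
          = l i j * (z t j - z t i)
            - l i j * (((Chat i t)ᵀ * C i - Cstar).mulVec (p j - p i) k) := by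
        intro j
        have e1 : ((Chat i t)ᵀ).mulVec ((C i).mulVec (p j - p i)) k
            = (((Chat i t)ᵀ * C i).mulVec (p j - p i)) k := by
          rw [← Matrix.mulVec_mulVec]
        have e2 : (((Chat i t)ᵀ * C i).mulVec (p j - p i)) k
            = (((Chat i t)ᵀ * C i - Cstar).mulVec (p j - p i)) k
              + (Cstar.mulVec (p j - p i)) k := by
          rw [Matrix.sub_mulVec]
          simp
        have e3 : (Cstar.mulVec (p j - p i)) k
            = Cstar.mulVec (p j) k - Cstar.mulVec (p i) k := by
          rw [Matrix.mulVec_sub]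
          simp
        have e4 : z t j - z t i = (phat j t k - phat i t k)
            - (Cstar.mulVec (p j) k - Cstar.mulVec (p i) k) := by
          simp only [hzdef]; ring
        rw [e1, e2, e3, e4]
        ring
      have hAz : A.mulVec (z t) i = ku * ∑ j, l i j * (z t j - z t i) := by
        have e5 : A.mulVec (z t) i
            = ∑ j, (ku * (l i j - if i = j then (∑ j', l i j') else 0)) * z t j := rfl
        rw [e5]
        have e6 : ∀ j, (ku * (l i j - if i = j then (∑ j', l i j') else 0)) * z t j
            = ku * (l i j * z t j) - ku * ((if i = j then (∑ j', l i j') else 0) * z t j) := by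
          intro j; ring
        rw [Finset.sum_congr rfl (fun j _ => e6 j), Finset.sum_sub_distrib,
          ← Finset.mul_sum, ← Finset.mul_sum]
        have e7 : ∑ j, (if i = j then (∑ j', l i j') else 0) * z t j
            = (∑ j', l i j') * z t i := by
          rw [Finset.sum_congr rfl (fun j _ => by
            by_cases h : i = j <;> simp [h]
            : ∀ j ∈ Finset.univ, (if i = j then (∑ j', l i j') else 0) * z t j
                = if i = j then (∑ j', l i j') * z t j else 0)]
          rw [Finset.sum_ite_eq Finset.univ i (fun j => (∑ j', l i j') * z t j)]
          simp
        rw [e7]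
        have e8 : ∑ j, l i j * (z t j - z t i)
            = (∑ j, l i j * z t j) - (∑ j, l i j) * z t i := by
          rw [Finset.sum_mul, ← Finset.sum_sub_distrib]
          apply Finset.sum_congr rfl
          intro j _
          ring
        rw [e8]
        ring
      rw [hWk, hfull, Finset.sum_congr rfl (fun j _ => hterm2 j), Finset.sum_sub_distrib,
        Pi.add_apply, hAz]
      simp only [hddef]
      ring
    obtain ⟨α, c, hc, lam, hlam, hconv⟩ :=
      consensus_scalar A hoff hrow r hreach z d K lw hK hlw hdbound hzode
    exact ⟨α, c, hc, lam, hlam, fun t ht i => hconv t ht i⟩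
  choose αf cf hcf lamf hlamf hconv using hcoord
  set phatinf : Fin N → Fin 3 → ℝ := fun i => Cstar.mulVec (p i) + (fun k => αf k) with hpinf
  have hne3 : (Finset.univ : Finset (Fin 3)).Nonempty := ⟨0, Finset.mem_univ 0⟩
  set c0 := Finset.univ.sup' hne3 cf with hc0
  set lam := Finset.univ.inf' hne3 lamf with hlamdef
  have hc0pos : 0 < c0 := lt_of_lt_of_le (hcf 0) (Finset.le_sup' cf (Finset.mem_univ 0))
  have hlampos : 0 < lam := by
    rw [hlamdef, Finset.lt_inf'_iff]
    exact fun k _ => hlamf k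
  have hrel : ∀ i j, phatinf j - phatinf i = Cstar.mulVec (p j - p i) := by
    intro i j
    simp only [hpinf]
    rw [Matrix.mulVec_sub]
    abel
  refine ⟨phatinf, 2 * c0, by linarith, lam, hlampos, ?_, hrel, ?_⟩
  · intro i t ht
    have hbk : ∀ k : Fin 3, |phat i t k - phatinf i k| ≤ c0 * Real.exp (-lam * t) := by
      intro k
      have h1 := hconv k t ht i
      have h2 : phat i t k - phatinf i k = phat i t k - Cstar.mulVec (p i) k - αf k := by
        simp only [hpinf, Pi.add_apply]
        ring
      rw [h2]
      refine le_trans h1 ?_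
      have hcfk : cf k ≤ c0 := Finset.le_sup' cf (Finset.mem_univ k)
      have hlamk : lam ≤ lamf k := Finset.inf'_le lamf (Finset.mem_univ k)
      have hexp : Real.exp (-lamf k * t) ≤ Real.exp (-lam * t) := by
        apply Real.exp_le_exp.mpr
        nlinarith
      calc cf k * Real.exp (-lamf k * t) ≤ c0 * Real.exp (-lamf k * t) :=
            mul_le_mul_of_nonneg_right hcfk (Real.exp_pos _).le
        _ ≤ c0 * Real.exp (-lam*t) := mul_le_mul_of_nonneg_left hexp hc0pos.le
    have hbound : ∀ k : Fin 3, ((phat i t - phatinf i) k)^2 ≤ (c0 * Real.exp (-lam*t))^2 := by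
      intro k
      have h3 := abs_le.mp (hbk k)
      have h4 := sq_le_sq' h3.1 h3.2
      simpa [Pi.sub_apply] using h4
    calc euclEnorm (phat i t - phatinf i) = Real.sqrt (∑ k, ((phat i t - phatinf i) k)^2) := rfl
      _ ≤ Real.sqrt (∑ _k : Fin 3, (c0 * Real.exp (-lam*t))^2) :=
          Real.sqrt_le_sqrt (Finset.sum_le_sum fun k _ => hbound k)
      _ = Real.sqrt (3 * (c0 * Real.exp (-lam*t))^2) := by
          rw [Finset.sum_const]
          norm_num
      _ ≤ Real.sqrt ((2*c0*Real.exp (-lam*t))^2) :=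
          Real.sqrt_le_sqrt (by nlinarith [sq_nonneg (c0*Real.exp (-lam*t))])
      _ = 2*c0*Real.exp (-lam*t) := Real.sqrt_sq (by positivity)
      _ = 2*c0 * Real.exp (-lam*t) := by ring
  · intro horth i j
    rw [hrel i j, enorm_mulVec_orth Cstar horth]
end
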